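/- arXiv:2307.16792 — 4 statements merged into one kernel-verified Lean document; each statement's English description precedes it below -/
import Mathlib

section
/- Let d, n ∈ ℕ, let P be a Borel probability measure on Z = [0,1]^d × {−1,1}, and let F be a nonempty class of Borel measurable functions from [0,1]^d to ℝ with ρ := sup_{f∈F} sup_{x∈[0,1]^d} |f(x)| < ∞. For a Borel measurable g: [0,1]^d → ℝ write R^φ_P(g) = ∫_Z φ(y·g(x)) dP(x,y). Suppose ψ: Z → ℝ is Borel measurable, (M,Γ,γ) ∈ (0,∞)³, and W is an integer with W ≥ 3 such that: (i) ∫ ψ dP ≤ inf_{f∈F} R^φ_P(f); (ii) sup{φ(t) : t ∈ ℝ, |t| ≤ ρ} ≤ M and |ψ(x,y)| ≤ M for all (x,y) ∈ Z; (iii) ∫ (φ(y·f(x)) − ψ(x,y))² dP(x,y) ≤ Γ·∫ (φ(y·f(x)) − ψ(x,y)) dP(x,y) for every f ∈ F; (iv) there exist f₁,…,f_W ∈ F such that for every f ∈ F there is some j ∈ {1,…,W} with sup_{x∈[0,1]^d} |f(x) − f_j(x)| ≤ γ. Let f̂ be an empirical logistic-risk minimizer over F from samples of size n. Then for every ε ∈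 (0,1): ∫_{Z^n} (R^φ_P(f̂_z) − ∫ ψ dP) dP^{⊗n}(z) ≤ 80·((1+ε)²/ε)·Γ·log(W)/n + 20·(1+ε)·M·log(W)/n + 20·(1+ε)·√γ·√(Γ·log(W)/n) + 4·γ + (1+ε)·inf_{f∈F} (R^φ_P(f) − ∫ ψ dP). -/
open MeasureTheory
open scoped ENNReal NNReal

namespace DNNLogistic

noncomputable section

/-- The unit cube `[0,1]^d` as a subset of `ℝ^d`. -/
def cube (d : ℕ) : Set (Fin d → ℝ) := {x | ∀ i, x i ∈ Set.Icc (0 : ℝ) 1}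

/-- The logistic loss `φ(t) = log (1 + e^{-t})`. -/
def logLoss (t : ℝ) : ℝ := Real.log (1 + Real.exp (-t))

/-- `sgn(t) = 1` if `t ≥ 0`, `sgn(t) = -1` otherwise. -/
def rsgn (t : ℝ) : ℝ := if 0 ≤ t then 1 else -1

/-- The Euclidean distance `‖x - z‖₂` on `ℝ^m`. -/
def eucDist {m : ℕ} (x z : Fin m → ℝ) : ℝ := Real.sqrt (∑ i, (x i - z i) ^ 2)

/-- The logistic risk `R^φ_{η,Q}(f)` of `f` with respect to the conditional probability
function `η` and the marginal distribution `Q` on `[0,1]^d`. -/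
def logRisk (d : ℕ) (Q : Measure (Fin d → ℝ)) (η f : (Fin d → ℝ) → ℝ) : ℝ :=
  ∫ x, (η x * logLoss (f x) + (1 - η x) * logLoss (-f x)) ∂Q

/-- The infimum of the logistic risk over all Borel measurable real-valued functions. -/
def infLogRisk (d : ℕ) (Q : Measure (Fin d → ℝ)) (η : (Fin d → ℝ) → ℝ) : ℝ :=
  sInf {t | ∃ g : (Fin d → ℝ) → ℝ, Measurable g ∧ t = logRisk d Q η g}

/-- The excess logistic risk `E^φ_{η,Q}(f)`. -/
def excessLogRisk (d : ℕ) (Q : Measure (Fin d → ℝ)) (η f : (Fin d → ℝ) → ℝ) : ℝ :=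
  logRisk d Q η f - infLogRisk d Q η

/-- The misclassification risk `R_{η,Q}(f)`; note `1{sgn(f x) = -1} = 1{f x < 0}` and
`1{sgn(f x) = 1} = 1{0 ≤ f x}`. -/
def misRisk (d : ℕ) (Q : Measure (Fin d → ℝ)) (η f : (Fin d → ℝ) → ℝ) : ℝ :=
  ∫ x, (η x * (if f x < 0 then (1 : ℝ) else 0)
      + (1 - η x) * (if 0 ≤ f x then (1 : ℝ) else 0)) ∂Q

/-- The infimum of the misclassification risk over all Borel measurable functions. -/
def infMisRisk (d : ℕ) (Q : Measure (Fin d → ℝ)) (η : (Fin d → ℝ) → ℝ) : ℝ :=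
  sInf {t | ∃ g : (Fin d → ℝ) → ℝ, Measurable g ∧ t = misRisk d Q η g}

/-- The excess misclassification error `E_{η,Q}(f)`. -/
def excessMisRisk (d : ℕ) (Q : Measure (Fin d → ℝ)) (η f : (Fin d → ℝ) → ℝ) : ℝ :=
  misRisk d Q η f - infMisRisk d Q η

/-- The joint distribution `P_{η,Q}` on `ℝ^d × ℝ`: the marginal on the first factor is `Q`,
and the conditional distribution of the label given `x` puts mass `η x` on `1` and mass
`1 - η x` on `-1`.  It satisfies `P_{η,Q}(S) = ∫ (η x • 1_S(x,1) + (1 - η x) • 1_S(x,-1)) dQ`. -/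
def PeQ (d : ℕ) (Q : Measure (Fin d → ℝ)) (η : (Fin d → ℝ) → ℝ) :
    Measure ((Fin d → ℝ) × ℝ) :=
  (Q.withDensity fun x => ENNReal.ofReal (η x)).map (fun x => (x, (1 : ℝ)))
    + (Q.withDensity fun x => ENNReal.ofReal (1 - η x)).map (fun x => (x, (-1 : ℝ)))

/-- The logistic risk `R^φ_P(f)` with respect to a joint distribution `P` on
`[0,1]^d × {-1,1}`. -/
def jointLogRisk (d : ℕ) (P : Measure ((Fin d → ℝ) × ℝ)) (f : (Fin d → ℝ) → ℝ) : ℝ :=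
  ∫ z, logLoss (z.2 * f z.1) ∂P

/-- The Lebesgue measure on the cube `[0,1]^d`. -/
def cubeVolume (d : ℕ) : Measure (Fin d → ℝ) := volume.restrict (cube d)

/-- The `n`-fold product measure `P^{⊗n}` on the sample space. -/
def nSample (d n : ℕ) (P : Measure ((Fin d → ℝ) × ℝ)) :
    Measure (Fin n → (Fin d → ℝ) × ℝ) :=
  Measure.pi fun _ => P

/-- `fhat` is an empirical logistic-risk minimizer over the class `Fcls` from samples of
size `n`: it is jointly Borel measurable, and for every sample
`z ∈ ([0,1]^d × {-1,1})^n` the function `fhat z` belongs to `Fcls` and minimizes the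
empirical logistic risk over `Fcls`. -/
def IsERM (d n : ℕ) (Fcls : Set ((Fin d → ℝ) → ℝ))
    (fhat : (Fin n → (Fin d → ℝ) × ℝ) → (Fin d → ℝ) → ℝ) : Prop :=
  Measurable (fun p : (Fin n → (Fin d → ℝ) × ℝ) × (Fin d → ℝ) => fhat p.1 p.2) ∧
  ∀ z : Fin n → (Fin d → ℝ) × ℝ, (∀ i, z i ∈ (cube d) ×ˢ ({-1, 1} : Set ℝ)) →
    fhat z ∈ Fcls ∧
    ∀ f ∈ Fcls,
      ∑ i, logLoss ((z i).2 * fhat z ((z i).1)) ≤ ∑ i, logLoss ((z i).2 * f ((z i).1))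

/-- The successive hidden layers of a fully connected ReLU network:
`u₀ = x` and `u_{k+1} = σ_{v_{k+1}}(W_k u_k)`. -/
def fnnHidden (m : ℕ → ℕ) (W : ∀ k : ℕ, Matrix (Fin (m (k + 1))) (Fin (m k)) ℝ)
    (v : ∀ k : ℕ, Fin (m k) → ℝ) : (k : ℕ) → (Fin (m 0) → ℝ) → (Fin (m k) → ℝ)
  | 0 => fun x => x
  | (k + 1) => fun x j => max ((W k).mulVec (fnnHidden m W v k x) j - v (k + 1) j) 0

/-- `f ∈ F^FNN_d(G, N, S, B, F)`: `f : ℝ^d → ℝ` is realized by a fully connected ReLU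
network `x ↦ W_L σ_{v_L} W_{L-1} ⋯ W_1 σ_{v_1} W_0 x` with depth `L ≤ G`, hidden widths
at most `N`, at most `S` nonzero entries among all weight matrices and bias vectors, all
entries bounded by `B` in absolute value, and `sup_{x ∈ [0,1]^d} |f x| ≤ F`. -/
def IsFNN (d : ℕ) (G N S B : ℝ) (F : ℝ≥0∞) (f : (Fin d → ℝ) → ℝ) : Prop :=
  ∃ (L : ℕ) (m : ℕ → ℕ) (W : ∀ k : ℕ, Matrix (Fin (m (k + 1))) (Fin (m k)) ℝ)
    (v : ∀ k : ℕ, Fin (m k) → ℝ) (hm0 : m 0 = d) (hmL : m (L + 1) = 1),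
    1 ≤ L ∧ (L : ℝ) ≤ G ∧
    (∀ k : ℕ, 1 ≤ k → k ≤ L → (m k : ℝ) ≤ N) ∧
    (((∑ k ∈ Finset.range (L + 1),
          Set.ncard {p : Fin (m (k + 1)) × Fin (m k) | W k p.1 p.2 ≠ 0}) +
        (∑ k ∈ Finset.Icc 1 L, Set.ncard {j : Fin (m k) | v k j ≠ 0}) : ℝ) ≤ S) ∧
    (∀ k : ℕ, k ≤ L → ∀ i j, |W k i j| ≤ B) ∧
    (∀ k : ℕ, 1 ≤ k → k ≤ L → ∀ j, |v k j| ≤ B) ∧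
    (∀ x ∈ cube d, ENNReal.ofReal |f x| ≤ F) ∧
    (∀ x : Fin d → ℝ,
      f x = (W L).mulVec (fnnHidden m W v L fun i => x (Fin.cast hm0 i)) (Fin.cast hmL.symm 0))

/-- The partial derivative (within the cube) of `f` in the `i`-th coordinate direction. -/
def pderivW (m : ℕ) (i : Fin m) (f : (Fin m → ℝ) → ℝ) : (Fin m → ℝ) → ℝ :=
  fun x => fderivWithin ℝ f (cube m) x (Pi.single i 1)

/-- The iterated partial derivative of `f` along the list of coordinate directions `l`. -/
def derivListW (m : ℕ) : List (Fin m) → ((Fin m → ℝ) → ℝ) → ((Fin m → ℝ) → ℝ)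
  | [], f => f
  | (i :: l), f => derivListW m l (pderivW m i f)

/-- Membership in the Hölder ball `B^β_r([0,1]^m)`: with `k = ⌈β⌉ - 1` and
`λ = β - ⌈β⌉ + 1`, `f` has continuous partial derivatives (within the cube) up to order
`k`, and the maximum of the sup-norms of its derivatives of order at most `k` plus the
maximum of the Hölder-`λ` seminorms of its derivatives of order `k` is at most `r`. -/
def MemHolderBall (m : ℕ) (β r : ℝ) (f : (Fin m → ℝ) → ℝ) : Prop :=
  (∀ l : List (Fin m), l.length < ⌈β⌉₊ - 1 →
    DifferentiableOn ℝ (derivListW m l f) (cube m)) ∧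
  (∀ l : List (Fin m), l.length ≤ ⌈β⌉₊ - 1 →
    ContinuousOn (derivListW m l f) (cube m)) ∧
  ∃ A Bc : ℝ, A + Bc ≤ r ∧
    (∀ l : List (Fin m), l.length ≤ ⌈β⌉₊ - 1 → ∀ x ∈ cube m, |derivListW m l f x| ≤ A) ∧
    (∀ l : List (Fin m), l.length = ⌈β⌉₊ - 1 → ∀ x ∈ cube m, ∀ z ∈ cube m, x ≠ z →
      |derivListW m l f x - derivListW m l f z| ≤ Bc * eucDist x z ^ (β - (⌈β⌉₊ : ℝ) + 1))

/-- `f ∈ G^M_d(dmax)`: on `[0,1]^d`, `f` computes the maximum of at most `dmax` of its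
input coordinates. -/
def GM (d dmax : ℕ) (f : (Fin d → ℝ) → ℝ) : Prop :=
  ∃ (I : Finset (Fin d)) (hI : I.Nonempty), I.card ≤ dmax ∧
    ∀ x ∈ cube d, f x = I.sup' hI fun i => x i

/-- `f ∈ G^H_d(dstar, β, r)`: on `[0,1]^d`, `f` depends on exactly `dstar` of its input
coordinates, through a function in the Hölder ball `B^β_r([0,1]^{dstar})`. -/
def GH (d dstar : ℕ) (β r : ℝ) (f : (Fin d → ℝ) → ℝ) : Prop :=
  ∃ (I : Finset (Fin d)) (hI : I.card = dstar) (g : (Fin dstar → ℝ) → ℝ),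
    MemHolderBall dstar β r g ∧
    ∀ x ∈ cube d, f x = g fun j => x ↑(I.orderIsoOfFin hI j)

/-- Iterated composition `h_{n-1} ∘ ⋯ ∘ h_1 ∘ h_0` of a chain of maps with varying
dimensions `D : ℕ → ℕ`. -/
def depChain (D : ℕ → ℕ) (h : ∀ i : ℕ, (Fin (D i) → ℝ) → (Fin (D (i + 1)) → ℝ)) :
    (n : ℕ) → (Fin (D 0) → ℝ) → (Fin (D n) → ℝ)
  | 0 => fun x => x
  | (n + 1) => fun x => h n (depChain D h n x)

/-- `f ∈ G^CHOM_d(q, K, dmax, dstar, β, r)`: on `[0,1]^d`, `f` is a composition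
`h_q ∘ ⋯ ∘ h_0` where `h_0 : [0,1]^d → [0,1]^K`, `h_i : [0,1]^K → [0,1]^K` for
`0 < i < q`, `h_q : [0,1]^{d or K} → ℝ`, and each coordinate function of each `h_i`
belongs to `G^H(dstar, β, r) ∪ G^M(dmax)`. -/
def GCHOM (q d dmax dstar K : ℕ) (β r : ℝ) (f : (Fin d → ℝ) → ℝ) : Prop :=
  ∃ (D : ℕ → ℕ) (h : ∀ i : ℕ, (Fin (D i) → ℝ) → (Fin (D (i + 1)) → ℝ))
    (hD0 : D 0 = d) (hDq : D (q + 1) = 1),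
    (∀ i : ℕ, 1 ≤ i → i ≤ q → D i = K) ∧
    (∀ i : ℕ, i ≤ q → ∀ j : Fin (D (i + 1)),
      GH (D i) dstar β r (fun x => h i x j) ∨ GM (D i) dmax (fun x => h i x j)) ∧
    (∀ i : ℕ, i < q → ∀ x ∈ cube (D i), h i x ∈ cube (D (i + 1))) ∧
    (∀ x ∈ cube d,
      f x = depChain D h (q + 1) (fun i => x (Fin.cast hD0 i)) (Fin.cast hDq.symm 0))

/-- `f ∈ G^CH_d(q, K, dstar, β, r)`: as `G^CHOM`, but every coordinate function belongs
to `G^H(dstar, β, r)`. -/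
def GCH (q d dstar K : ℕ) (β r : ℝ) (f : (Fin d → ℝ) → ℝ) : Prop :=
  ∃ (D : ℕ → ℕ) (h : ∀ i : ℕ, (Fin (D i) → ℝ) → (Fin (D (i + 1)) → ℝ))
    (hD0 : D 0 = d) (hDq : D (q + 1) = 1),
    (∀ i : ℕ, 1 ≤ i → i ≤ q → D i = K) ∧
    (∀ i : ℕ, i ≤ q → ∀ j : Fin (D (i + 1)), GH (D i) dstar β r (fun x => h i x j)) ∧
    (∀ i : ℕ, i < q → ∀ x ∈ cube (D i), h i x ∈ cube (D (i + 1))) ∧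
    (∀ x ∈ cube d,
      f x = depChain D h (q + 1) (fun i => x (Fin.cast hD0 i)) (Fin.cast hDq.symm 0))

/-- The sup-norm over the cube of the (componentwise) difference of two vector-valued
functions. -/
def supDiffVec (m k : ℕ) (g g' : (Fin m → ℝ) → (Fin k → ℝ)) : ℝ :=
  sSup {t | ∃ x ∈ cube m, ∃ j : Fin k, t = |g x j - g' x j|}

/-- The binary entropy function `H`. -/
def entH (t : ℝ) : ℝ :=
  if t = 0 ∨ t = 1 then 0 else t * Real.log (1 / t) + (1 - t) * Real.log (1 / (1 - t))

/-- `sup { 1/(2(2 + e^t + e^{-t})) : min u v ≤ t ≤ max u v }`. -/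
def wSup (u v : ℝ) : ℝ :=
  sSup {s | ∃ t ∈ Set.Icc (min u v) (max u v), s = 1 / (2 * (2 + Real.exp t + Real.exp (-t)))}

/-- The function `J` of Statement 19. -/
def Jfun (x y : ℝ) : ℝ :=
  (x + y) * Real.log (2 / (x + y)) + (2 - x - y) * Real.log (2 / (2 - x - y))
    - (x * Real.log (1 / x) + (1 - x) * Real.log (1 / (1 - x))
        + y * Real.log (1 / y) + (1 - y) * Real.log (1 / (1 - y)))

/-- The grid `G_{Q,d}` of points of `[0,1]^d` whose coordinates are odd multiples of
`1/(2Q)`. -/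
def oddGrid (d Qn : ℕ) : Set (Fin d → ℝ) :=
  {a | a ∈ cube d ∧ ∀ i, ∃ k : ℤ, Odd k ∧ a i = (k : ℝ) / (2 * (Qn : ℝ))}

/-! ### Auxiliary lemmas -/

lemma logLoss_nonneg (t : ℝ) : 0 ≤ logLoss t :=
  Real.log_nonneg (by nlinarith [Real.exp_pos (-t)])

lemma logLoss_anti {a b : ℝ} (h : a ≤ b) : logLoss b ≤ logLoss a := by
  apply Real.log_le_log (by positivity)
  have := Real.exp_le_exp.2 (neg_le_neg h)
  linarith

lemma logLoss_sub_le {a b : ℝ} (h : a ≤ b) : logLoss a - logLoss b ≤ b - a := by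
  have h1 : (1 : ℝ) + Real.exp (-a) ≤ Real.exp (b - a) * (1 + Real.exp (-b)) := by
    have e1 : Real.exp (b - a) * Real.exp (-b) = Real.exp (-a) := by
      rw [← Real.exp_add]; ring_nf
    have e2 : (1 : ℝ) ≤ Real.exp (b - a) := Real.one_le_exp (by linarith)
    nlinarith [Real.exp_pos (-b)]
  have h2 : logLoss a ≤ (b - a) + logLoss b := by
    have := Real.log_le_log (by positivity) h1
    rwa [Real.log_mul (by positivity) (by positivity), Real.log_exp] at this
  linarith

lemma logLoss_lipschitz (a b : ℝ) : |logLoss a - logLoss b| ≤ |a - b| := by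
  rcases le_total a b with h | h
  · have h1 := logLoss_anti h
    have h2 := logLoss_sub_le h
    rw [abs_of_nonneg (by linarith : (0:ℝ) ≤ logLoss a - logLoss b),
      abs_of_nonpos (by linarith : a - b ≤ 0)]
    linarith
  · have h1 := logLoss_anti h
    have h2 := logLoss_sub_le h
    rw [abs_of_nonpos (by linarith : logLoss a - logLoss b ≤ 0),
      abs_of_nonneg (by linarith : (0:ℝ) ≤ a - b)]
    linarith

lemma exp_neg_le_quad {u : ℝ} (hu : |u| ≤ 1) : Real.exp (-u) ≤ 1 - u + u ^ 2 := by
  have h := Real.exp_bound (x := -u) (by rwa [abs_neg]) (n := 2) (by norm_num)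
  have hs : ∑ i ∈ Finset.range 2, (-u) ^ i / (Nat.factorial i) = 1 - u := by
    simp [Finset.sum_range_succ]; ring
  rw [hs] at h
  have h2 : Real.exp (-u) - (1 - u) ≤ |(-u)| ^ 2 * ((2 + 1 : ℕ) / ((Nat.factorial 2) * 2)) :=
    le_trans (le_abs_self _) h
  have h3 : |(-u)| ^ 2 = u ^ 2 := by rw [abs_neg, sq_abs]
  rw [h3] at h2
  norm_num at h2
  nlinarith [sq_nonneg u]

universe u

lemma integral_pi_prod {α : Type u} [MeasurableSpace α] (P : Measure α)
    [IsProbabilityMeasure P] {n : ℕ} (f : Fin n → α → ℝ) :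
    ∫ z : Fin n → α, ∏ i, f i (z i) ∂(Measure.pi fun _ => P) = ∏ i, ∫ x, f i x ∂P := by
  letI : MeasureSpace α := ⟨P⟩
  exact MeasureTheory.integral_fintype_prod_eq_prod f

lemma integral_pi_eval {α : Type u} [MeasurableSpace α] (P : Measure α)
    [IsProbabilityMeasure P] {n : ℕ} (f : α → ℝ) (i : Fin n) :
    ∫ z : Fin n → α, f (z i) ∂(Measure.pi fun _ => P) = ∫ x, f x ∂P := by
  have h := integral_pi_prod P (n := n) (fun j => if j = i then f else fun _ => 1)
  have h1 : ∀ z : Fin n → α, (∏ j, (if j = i then f else fun _ => (1:ℝ)) (z j)) = f (z i) := by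
    intro z
    rw [Finset.prod_eq_single i]
    · simp
    · intro j _ hj; simp [hj]
    · simp
  have h2 : (∏ j : Fin n, ∫ x, (if j = i then f else fun _ => (1:ℝ)) x ∂P) = ∫ x, f x ∂P := by
    rw [Finset.prod_eq_single i]
    · simp
    · intro j _ hj; simp [hj]
    · simp
  rw [← h2, ← h]
  exact integral_congr_ae (Filter.Eventually.of_forall fun z => (h1 z).symm)


set_option maxHeartbeats 1000000 in
/-- Theorem 2.1, oracle inequality for ERM with logistic loss. -/
theorem statement0 (d n : ℕ) (hd : 0 < d) (hn : 0 < n)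
    (P : Measure ((Fin d → ℝ) × ℝ)) [IsProbabilityMeasure P]
    (hP : P ((cube d) ×ˢ ({-1, 1} : Set ℝ)) = 1)
    (Fcls : Set ((Fin d → ℝ) → ℝ)) (hFne : Fcls.Nonempty)
    (hFmeas : ∀ f ∈ Fcls, Measurable f)
    (ρ : ℝ) (hρbdd : BddAbove {t | ∃ f ∈ Fcls, ∃ x ∈ cube d, t = |f x|})
    (hρ : ρ = sSup {t | ∃ f ∈ Fcls, ∃ x ∈ cube d, t = |f x|})
    (ψ : (Fin d → ℝ) × ℝ → ℝ) (hψm : Measurable ψ)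
    (M Γ γ : ℝ) (hM : 0 < M) (hΓ : 0 < Γ) (hγ : 0 < γ)
    (W : ℕ) (hW : 3 ≤ W)
    (h1 : ∀ f ∈ Fcls, ∫ z, ψ z ∂P ≤ jointLogRisk d P f)
    (h2a : ∀ t : ℝ, |t| ≤ ρ → logLoss t ≤ M)
    (h2b : ∀ z ∈ (cube d) ×ˢ ({-1, 1} : Set ℝ), |ψ z| ≤ M)
    (h3 : ∀ f ∈ Fcls,
      ∫ z, (logLoss (z.2 * f z.1) - ψ z) ^ 2 ∂P
        ≤ Γ * ∫ z, (logLoss (z.2 * f z.1) - ψ z) ∂P)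
    (h4 : ∃ fs : Fin W → (Fin d → ℝ) → ℝ, (∀ j, fs j ∈ Fcls) ∧
      ∀ f ∈ Fcls, ∃ j, ∀ x ∈ cube d, |f x - fs j x| ≤ γ)
    (fhat : (Fin n → (Fin d → ℝ) × ℝ) → (Fin d → ℝ) → ℝ)
    (hERM : IsERM d n Fcls fhat)
    (ε : ℝ) (hε : ε ∈ Set.Ioo (0 : ℝ) 1) :
    ∫ z, (jointLogRisk d P (fhat z) - ∫ w, ψ w ∂P) ∂(nSample d n P)
      ≤ 80 * ((1 + ε) ^ 2 / ε) * (Γ * Real.log (W : ℝ) / (n : ℝ))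
        + 20 * (1 + ε) * (M * Real.log (W : ℝ) / (n : ℝ))
        + 20 * (1 + ε) * Real.sqrt γ * Real.sqrt (Γ * Real.log (W : ℝ) / (n : ℝ))
        + 4 * γ
        + (1 + ε) * sInf {t | ∃ f ∈ Fcls, t = jointLogRisk d P f - ∫ w, ψ w ∂P} := by
  classical
  obtain ⟨hε0, hε1⟩ := hε
  have hn' : (0:ℝ) < n := by exact_mod_cast hn
  have hW' : (1:ℝ) < W := by
    have : (3:ℝ) ≤ W := by exact_mod_cast hW
    linarith
  set S : Set ((Fin d → ℝ) × ℝ) := (cube d) ×ˢ ({-1, 1} : Set ℝ) with hSdef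
  have hcube : MeasurableSet (cube d) := by
    have h : cube d = ⋂ i, (fun x : Fin d → ℝ => x i) ⁻¹' (Set.Icc 0 1) := by
      ext x; simp [cube]
    rw [h]
    exact MeasurableSet.iInter fun i => (measurable_pi_apply i) measurableSet_Icc
  have hSm : MeasurableSet S := hcube.prod ((measurableSet_singleton (1:ℝ)).insert (-1))
  have hPSc : P Sᶜ = 0 := by
    rw [measure_compl hSm (measure_ne_top P S), measure_univ, hP, tsub_self]
  have haeP : ∀ᵐ w ∂P, w ∈ S := by
    rw [ae_iff]
    exact hPSc
  haveI : IsProbabilityMeasure (nSample d n P) := by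
    unfold nSample; infer_instance
  have hae : ∀ᵐ z ∂(nSample d n P), ∀ i, z i ∈ S := by
    rw [ae_all_iff]
    intro i
    have h0 : (nSample d n P) (Function.eval i ⁻¹' Sᶜ) = 0 := by
      unfold nSample
      exact Measure.pi_eval_preimage_null _ hPSc
    rw [ae_iff]
    exact h0
  set ψbar := ∫ w, ψ w ∂P with hψbar
  set L : ((Fin d → ℝ) → ℝ) → ((Fin d → ℝ) × ℝ) → ℝ :=
    fun f w => logLoss (w.2 * f w.1) - ψ w with hLdef
  have hcontLL : Continuous logLoss := by
    have h : Continuous fun t : ℝ => 1 + Real.exp (-t) := by continuity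
    exact h.log fun t => ne_of_gt (by positivity : (0:ℝ) < 1 + Real.exp (-t))
  have hLmeas : ∀ f : (Fin d → ℝ) → ℝ, Measurable f → Measurable (L f) := fun f hf =>
    ((hcontLL.measurable).comp (measurable_snd.mul (hf.comp measurable_fst))).sub hψm
  have hρle : ∀ f ∈ Fcls, ∀ x ∈ cube d, |f x| ≤ ρ := fun f hf x hx =>
    hρ ▸ le_csSup hρbdd ⟨f, hf, x, hx, rfl⟩
  have habs2 : ∀ w ∈ S, |w.2| = 1 := by
    intro w hw
    have hy : w.2 = -1 ∨ w.2 = 1 := by simpa using hw.2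
    rcases hy with h | h <;> simp [h]
  have hφbd : ∀ f ∈ Fcls, ∀ w ∈ S, logLoss (w.2 * f w.1) ≤ M := by
    intro f hf w hw
    apply h2a
    rw [abs_mul, habs2 w hw, one_mul]
    exact hρle f hf w.1 hw.1
  have hLbound : ∀ f ∈ Fcls, ∀ w ∈ S, |L f w| ≤ 2*M := by
    intro f hf w hw
    have h1' := hφbd f hf w hw
    have h2' := logLoss_nonneg (w.2 * f w.1)
    have h3' := abs_le.1 (h2b w hw)
    rw [abs_le]
    constructor <;> simp only [hLdef] <;> [linarith; linarith]
  have hLint : ∀ f ∈ Fcls, Integrable (L f) P := by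
    intro f hf
    refine Integrable.mono' (integrable_const (2*M))
      ((hLmeas f (hFmeas f hf)).aestronglyMeasurable) ?_
    filter_upwards [haeP] with w hw
    rw [Real.norm_eq_abs]
    exact hLbound f hf w hw
  have hψint : Integrable ψ P := by
    refine Integrable.mono' (integrable_const M) hψm.aestronglyMeasurable ?_
    filter_upwards [haeP] with w hw
    rw [Real.norm_eq_abs]
    exact h2b w hw
  have hφmeas : ∀ f : (Fin d → ℝ) → ℝ, Measurable f →
      Measurable (fun w : (Fin d → ℝ) × ℝ => logLoss (w.2 * f w.1)) := fun f hf =>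
    (hcontLL.measurable).comp (measurable_snd.mul (hf.comp measurable_fst))
  have hφint : ∀ f ∈ Fcls, Integrable (fun w : (Fin d → ℝ) × ℝ => logLoss (w.2 * f w.1)) P := by
    intro f hf
    refine Integrable.mono' (integrable_const M)
      ((hφmeas f (hFmeas f hf)).aestronglyMeasurable) ?_
    filter_upwards [haeP] with w hw
    rw [Real.norm_eq_abs, abs_of_nonneg (logLoss_nonneg _)]
    exact hφbd f hf w hw
  have hELf : ∀ f ∈ Fcls, ∫ w, L f w ∂P = jointLogRisk d P f - ψbar := by
    intro f hf
    exact integral_sub (hφint f hf) hψint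
  have hμnn : ∀ f ∈ Fcls, 0 ≤ ∫ w, L f w ∂P := by
    intro f hf
    rw [hELf f hf]
    have := h1 f hf
    simp only [hψbar]
    linarith
  have hμle : ∀ f ∈ Fcls, ∫ w, L f w ∂P ≤ 2*M := by
    intro f hf
    calc ∫ w, L f w ∂P ≤ ∫ _w, 2*M ∂P := by
          refine integral_mono_ae (hLint f hf) (integrable_const _) ?_
          filter_upwards [haeP] with w hw
          exact le_trans (le_abs_self _) (hLbound f hf w hw)
      _ = 2*M := by simp
  have hL2int : ∀ f ∈ Fcls, Integrable (fun w => (L f w)^2) P := by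
    intro f hf
    refine Integrable.mono' (integrable_const ((2*M)^2))
      (((hLmeas f (hFmeas f hf)).pow_const 2).aestronglyMeasurable) ?_
    filter_upwards [haeP] with w hw
    rw [Real.norm_eq_abs, abs_of_nonneg (sq_nonneg _)]
    have h1' := hLbound f hf w hw
    nlinarith [abs_nonneg (L f w), sq_abs (L f w)]
  obtain ⟨fs, hfsF, hfsnet⟩ := h4
  set μj : Fin W → ℝ := fun j => ∫ w, L (fs j) w ∂P with hμjdef
  -- constants
  set b : ℝ := 2*M with hbdef
  have hb : 0 < b := by positivity
  set lam : ℝ := min ((n:ℝ) / ((1+ε)*b)) (ε*(n:ℝ) / ((1+ε)^2*Γ)) with hlamdef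
  have hlam0 : 0 < lam := lt_min (by positivity) (by positivity)
  set lam' : ℝ := lam*(1+ε)/(n:ℝ) with hlam'def
  have hlam'0 : 0 < lam' := by positivity
  have hkey1 : lam' * b ≤ 1 := by
    have h := min_le_left ((n:ℝ) / ((1+ε)*b)) (ε*(n:ℝ) / ((1+ε)^2*Γ))
    rw [← hlamdef] at h
    have h2 : lam * ((1+ε)*b/(n:ℝ)) ≤ ((n:ℝ) / ((1+ε)*b)) * ((1+ε)*b/(n:ℝ)) :=
      mul_le_mul_of_nonneg_right h (by positivity)
    have h3 : ((n:ℝ) / ((1+ε)*b)) * ((1+ε)*b/(n:ℝ)) = 1 := by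
      field_simp
    have h4' : lam' * b = lam * ((1+ε)*b/(n:ℝ)) := by
      rw [hlam'def]; ring
    rw [h4']; rw [h3] at h2; exact h2
  have hkey2 : (1+ε) * lam' * Γ ≤ ε := by
    have h := min_le_right ((n:ℝ) / ((1+ε)*b)) (ε*(n:ℝ) / ((1+ε)^2*Γ))
    rw [← hlamdef] at h
    have h2 : lam * ((1+ε)^2*Γ/(n:ℝ)) ≤ (ε*(n:ℝ) / ((1+ε)^2*Γ)) * ((1+ε)^2*Γ/(n:ℝ)) :=
      mul_le_mul_of_nonneg_right h (by positivity)
    have h3 : (ε*(n:ℝ) / ((1+ε)^2*Γ)) * ((1+ε)^2*Γ/(n:ℝ)) = ε := by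
      field_simp
    have h4' : (1+ε) * lam' * Γ = lam * ((1+ε)^2*Γ/(n:ℝ)) := by
      rw [hlam'def]; ring
    rw [h4']; rw [h3] at h2; exact h2
  -- MGF bound for a single net function
  have hexpint : ∀ j : Fin W,
      Integrable (fun w => Real.exp (-(lam' * L (fs j) w))) P := by
    intro j
    refine Integrable.mono' (integrable_const (Real.exp 1))
      ((Real.continuous_exp.measurable.comp
        (((hLmeas _ (hFmeas _ (hfsF j))).const_mul lam').neg)).aestronglyMeasurable) ?_
    filter_upwards [haeP] with w hw
    rw [Real.norm_eq_abs, Real.abs_exp]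
    apply Real.exp_le_exp.2
    have h1' := hLbound _ (hfsF j) w hw
    have := neg_abs_le (L (fs j) w)
    nlinarith [abs_nonneg (L (fs j) w)]
  have hmgf : ∀ j : Fin W,
      ∫ w, Real.exp (-(lam' * L (fs j) w)) ∂P
        ≤ Real.exp (lam' * μj j * (lam' * Γ - 1)) := by
    intro j
    have hfj := hfsF j
    have hint1 : Integrable (fun w => 1 - lam' * L (fs j) w) P :=
      (integrable_const (1:ℝ)).sub ((hLint _ hfj).const_mul lam')
    have hint2 : Integrable (fun w => lam'^2 * (L (fs j) w)^2) P :=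
      (hL2int _ hfj).const_mul (lam'^2)
    have hintRHS : Integrable
        (fun w => 1 - lam' * L (fs j) w + lam'^2 * (L (fs j) w)^2) P := hint1.add hint2
    have hstep1 : ∫ w, Real.exp (-(lam' * L (fs j) w)) ∂P
        ≤ ∫ w, (1 - lam' * L (fs j) w + lam'^2 * (L (fs j) w)^2) ∂P := by
      refine integral_mono_ae (hexpint j) hintRHS ?_
      filter_upwards [haeP] with w hw
      have hu : |lam' * L (fs j) w| ≤ 1 := by
        rw [abs_mul, abs_of_pos hlam'0]
        calc lam' * |L (fs j) w| ≤ lam' * b :=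
              mul_le_mul_of_nonneg_left (hLbound _ hfj w hw) (le_of_lt hlam'0)
          _ ≤ 1 := hkey1
      have := exp_neg_le_quad hu
      calc Real.exp (-(lam' * L (fs j) w))
          ≤ 1 - lam' * L (fs j) w + (lam' * L (fs j) w)^2 := this
        _ = 1 - lam' * L (fs j) w + lam'^2 * (L (fs j) w)^2 := by ring
    have hstep2 : ∫ w, (1 - lam' * L (fs j) w + lam'^2 * (L (fs j) w)^2) ∂P
        = 1 - lam' * μj j + lam'^2 * ∫ w, (L (fs j) w)^2 ∂P := by
      rw [integral_add hint1 hint2,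
        integral_sub (integrable_const (1:ℝ)) ((hLint _ hfj).const_mul lam'),
        integral_const_mul, integral_const_mul, integral_const]
      simp [hμjdef]
    have hstep3 : lam'^2 * ∫ w, (L (fs j) w)^2 ∂P ≤ lam'^2 * (Γ * μj j) := by
      apply mul_le_mul_of_nonneg_left _ (sq_nonneg lam')
      exact h3 (fs j) hfj
    have hstep4 : 1 - lam' * μj j + lam'^2 * (Γ * μj j)
        = lam' * μj j * (lam' * Γ - 1) + 1 := by ring
    calc ∫ w, Real.exp (-(lam' * L (fs j) w)) ∂P
        ≤ 1 - lam' * μj j + lam'^2 * ∫ w, (L (fs j) w)^2 ∂P := by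
          rw [← hstep2]; exact hstep1
      _ ≤ lam' * μj j * (lam' * Γ - 1) + 1 := by rw [← hstep4]; linarith
      _ ≤ Real.exp (lam' * μj j * (lam' * Γ - 1)) := Real.add_one_le_exp _
  -- the deviation functionals
  set Dj : Fin W → (Fin n → (Fin d → ℝ) × ℝ) → ℝ :=
    fun j z => μj j - (1+ε)/(n:ℝ) * ∑ i, L (fs j) (z i) with hDjdef
  have hne : (Finset.univ : Finset (Fin W)).Nonempty := by
    refine ⟨⟨0, ?_⟩, Finset.mem_univ _⟩
    omega
  set maxD : (Fin n → (Fin d → ℝ) × ℝ) → ℝ :=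
    fun z => Finset.univ.sup' hne (fun j => Dj j z) with hmaxDdef
  -- integrability of sample sums
  have hevalInt : ∀ f ∈ Fcls, ∀ i : Fin n,
      Integrable (fun z : Fin n → (Fin d → ℝ) × ℝ => L f (z i)) (nSample d n P) := by
    intro f hf i
    refine Integrable.mono' (integrable_const b)
      (((hLmeas f (hFmeas f hf)).comp (measurable_pi_apply i)).aestronglyMeasurable) ?_
    filter_upwards [hae] with z hz
    rw [Real.norm_eq_abs]
    exact hLbound f hf (z i) (hz i)
  have hsumInt : ∀ f ∈ Fcls,
      Integrable (fun z : Fin n → (Fin d → ℝ) × ℝ => ∑ i, L f (z i)) (nSample d n P) := by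
    intro f hf
    exact integrable_finset_sum _ (fun i _ => hevalInt f hf i)
  have hDjInt : ∀ j, Integrable (Dj j) (nSample d n P) := by
    intro j
    exact (integrable_const (μj j)).sub ((hsumInt _ (hfsF j)).const_mul ((1+ε)/(n:ℝ)))
  have hDjMeas : ∀ j, Measurable (Dj j) := by
    intro j
    apply Measurable.sub measurable_const
    apply Measurable.const_mul
    exact Finset.measurable_sum _
      (fun i _ => (hLmeas _ (hFmeas _ (hfsF j))).comp (measurable_pi_apply i))
  have hμjb : ∀ j, |μj j| ≤ b := by
    intro j
    rw [abs_le]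
    refine ⟨by nlinarith [hμnn _ (hfsF j), hb], hμle _ (hfsF j)⟩
  set C1 : ℝ := b + (1+ε)*b with hC1def
  have hDjbd : ∀ j, ∀ z : Fin n → (Fin d → ℝ) × ℝ, (∀ i, z i ∈ S) → |Dj j z| ≤ C1 := by
    intro j z hz
    have hsum : |∑ i, L (fs j) (z i)| ≤ (n:ℝ) * b := by
      calc |∑ i, L (fs j) (z i)| ≤ ∑ i, |L (fs j) (z i)| := Finset.abs_sum_le_sum_abs _ _
        _ ≤ ∑ _i : Fin n, b := Finset.sum_le_sum fun i _ => hLbound _ (hfsF j) (z i) (hz i)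
        _ = (n:ℝ) * b := by
            rw [Finset.sum_const, Finset.card_univ, Fintype.card_fin, nsmul_eq_mul]
    have h1' := abs_le.1 (hμjb j)
    have hcoef : (0:ℝ) < (1+ε)/(n:ℝ) := by positivity
    have h2' : |(1+ε)/(n:ℝ) * ∑ i, L (fs j) (z i)| ≤ (1+ε)*b := by
      rw [abs_mul, abs_of_pos hcoef]
      calc (1+ε)/(n:ℝ) * |∑ i, L (fs j) (z i)| ≤ (1+ε)/(n:ℝ) * ((n:ℝ)*b) :=
            mul_le_mul_of_nonneg_left hsum (le_of_lt hcoef)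
        _ = (1+ε)*b := by field_simp
    have h2'' := abs_le.1 h2'
    rw [abs_le]
    constructor <;> simp only [hDjdef] <;> [linarith; linarith]
  have hmaxDbd : ∀ z : Fin n → (Fin d → ℝ) × ℝ, (∀ i, z i ∈ S) → |maxD z| ≤ C1 := by
    intro z hz
    rw [abs_le]
    constructor
    · obtain ⟨j0, -, hj0⟩ := Finset.exists_mem_eq_sup' hne (fun j => Dj j z)
      have he : maxD z = Dj j0 z := hj0
      rw [he]
      exact (abs_le.1 (hDjbd j0 z hz)).1
    · apply Finset.sup'_le
      intro j _
      exact (abs_le.1 (hDjbd j z hz)).2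
  have hmaxDMeas : Measurable maxD := by
    have heq : maxD = Finset.univ.sup' hne (fun j => Dj j) := by
      funext z
      rw [Finset.sup'_apply]
    rw [heq]
    exact Finset.measurable_sup' hne (fun j _ => hDjMeas j)
  have hmaxDInt : Integrable maxD (nSample d n P) := by
    refine Integrable.mono' (integrable_const C1) hmaxDMeas.aestronglyMeasurable ?_
    filter_upwards [hae] with z hz
    rw [Real.norm_eq_abs]
    exact hmaxDbd z hz
  have hexpDjInt : ∀ j,
      Integrable (fun z => Real.exp (lam * Dj j z)) (nSample d n P) := by
    intro j
    refine Integrable.mono' (integrable_const (Real.exp (lam * C1)))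
      ((Real.continuous_exp.measurable.comp ((hDjMeas j).const_mul lam)).aestronglyMeasurable) ?_
    filter_upwards [hae] with z hz
    rw [Real.norm_eq_abs, Real.abs_exp]
    exact Real.exp_le_exp.2
      (mul_le_mul_of_nonneg_left ((abs_le.1 (hDjbd j z hz)).2) hlam0.le)
  have hexpmaxInt : Integrable (fun z => Real.exp (lam * maxD z)) (nSample d n P) := by
    refine Integrable.mono' (integrable_const (Real.exp (lam * C1)))
      ((Real.continuous_exp.measurable.comp (hmaxDMeas.const_mul lam)).aestronglyMeasurable) ?_
    filter_upwards [hae] with z hz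
    rw [Real.norm_eq_abs, Real.abs_exp]
    exact Real.exp_le_exp.2
      (mul_le_mul_of_nonneg_left ((abs_le.1 (hmaxDbd z hz)).2) hlam0.le)
  -- expectation of exp(lam * Dj) is at most one
  have hDj1 : ∀ j, ∫ z, Real.exp (lam * Dj j z) ∂(nSample d n P) ≤ 1 := by
    intro j
    have hrw : ∀ z : Fin n → (Fin d → ℝ) × ℝ,
        Real.exp (lam * Dj j z)
          = Real.exp (lam * μj j) * ∏ i, Real.exp (-(lam' * L (fs j) (z i))) := by
      intro z
      rw [← Real.exp_sum, ← Real.exp_add]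
      congr 1
      have hs : ∑ i, -(lam' * L (fs j) (z i)) = -(lam' * ∑ i, L (fs j) (z i)) := by
        rw [Finset.mul_sum, Finset.sum_neg_distrib]
      rw [hs]
      simp only [hDjdef, hlam'def]
      field_simp
      ring
    calc ∫ z, Real.exp (lam * Dj j z) ∂(nSample d n P)
        = ∫ z, Real.exp (lam * μj j) * ∏ i, Real.exp (-(lam' * L (fs j) (z i)))
            ∂(nSample d n P) := integral_congr_ae (Filter.Eventually.of_forall hrw)
      _ = Real.exp (lam * μj j)
            * ∫ z, ∏ i, Real.exp (-(lam' * L (fs j) (z i))) ∂(nSample d n P) :=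
          integral_const_mul _ _
      _ = Real.exp (lam * μj j) * (∫ w, Real.exp (-(lam' * L (fs j) w)) ∂P)^n := by
          unfold nSample
          rw [integral_pi_prod P (fun _ w => Real.exp (-(lam' * L (fs j) w)))]
          rw [Finset.prod_const, Finset.card_univ, Fintype.card_fin]
      _ ≤ Real.exp (lam * μj j) * (Real.exp (lam' * μj j * (lam' * Γ - 1)))^n := by
          apply mul_le_mul_of_nonneg_left _ (le_of_lt (Real.exp_pos _))
          exact pow_le_pow_left₀ (integral_nonneg fun w => (Real.exp_pos _).le) (hmgf j) n
      _ = Real.exp (lam * μj j + (n:ℝ) * (lam' * μj j * (lam' * Γ - 1))) := by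
          rw [← Real.exp_nat_mul, ← Real.exp_add]
      _ ≤ 1 := by
          rw [Real.exp_le_one_iff]
          have hid : lam * μj j + (n:ℝ) * (lam' * μj j * (lam' * Γ - 1))
              = lam * μj j * ((1+ε) * lam' * Γ - ε) := by
            rw [hlam'def]
            field_simp
            ring
          rw [hid]
          have h1' : (1+ε) * lam' * Γ - ε ≤ 0 := by linarith [hkey2]
          have h2' : 0 ≤ lam * μj j := mul_nonneg hlam0.le (hμnn _ (hfsF j))
          exact mul_nonpos_of_nonneg_of_nonpos h2' h1'
  -- Jensen and union bound
  haveI : NeZero (nSample d n P) := ⟨IsProbabilityMeasure.ne_zero _⟩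
  have hJ : Real.exp (lam * ∫ z, maxD z ∂(nSample d n P))
      ≤ ∫ z, Real.exp (lam * maxD z) ∂(nSample d n P) := by
    have hgi : Integrable (Real.exp ∘ fun z => lam * maxD z) (nSample d n P) := by
      simpa [Function.comp_def] using hexpmaxInt
    have h := convexOn_exp.map_average_le Real.continuous_exp.continuousOn isClosed_univ
      (Filter.Eventually.of_forall fun _ => Set.mem_univ _) (hmaxDInt.const_mul lam) hgi
    rw [average_eq_integral, average_eq_integral, integral_const_mul] at h
    exact h
  have hsumexp : ∫ z, Real.exp (lam * maxD z) ∂(nSample d n P) ≤ (W:ℝ) := by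
    have hptw : ∀ z : Fin n → (Fin d → ℝ) × ℝ,
        Real.exp (lam * maxD z) ≤ ∑ j : Fin W, Real.exp (lam * Dj j z) := by
      intro z
      obtain ⟨j0, -, hj0⟩ := Finset.exists_mem_eq_sup' hne (fun j => Dj j z)
      have he : maxD z = Dj j0 z := hj0
      rw [he]
      exact Finset.single_le_sum (f := fun j => Real.exp (lam * Dj j z))
        (fun j _ => (Real.exp_pos _).le) (Finset.mem_univ j0)
    calc ∫ z, Real.exp (lam * maxD z) ∂(nSample d n P)
        ≤ ∫ z, ∑ j : Fin W, Real.exp (lam * Dj j z) ∂(nSample d n P) :=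
          integral_mono_ae hexpmaxInt (integrable_finset_sum _ fun j _ => hexpDjInt j)
            (Filter.Eventually.of_forall hptw)
      _ = ∑ j : Fin W, ∫ z, Real.exp (lam * Dj j z) ∂(nSample d n P) :=
          integral_finset_sum _ (fun j _ => hexpDjInt j)
      _ ≤ ∑ _j : Fin W, (1:ℝ) := Finset.sum_le_sum fun j _ => hDj1 j
      _ = (W:ℝ) := by simp
  have hmaxDle : ∫ z, maxD z ∂(nSample d n P) ≤ Real.log (W:ℝ) / lam := by
    have h0 : lam * ∫ z, maxD z ∂(nSample d n P) ≤ Real.log (W:ℝ) :=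
      (Real.le_log_iff_exp_le (by linarith : (0:ℝ) < (W:ℝ))).2 (hJ.trans hsumexp)
    rw [le_div_iff₀ hlam0]
    linarith
  -- pointwise oracle inequality
  have hOracle : ∀ f0 ∈ Fcls, ∀ᵐ z ∂(nSample d n P),
      jointLogRisk d P (fhat z) - ψbar
        ≤ maxD z + (1+ε)/(n:ℝ) * ∑ i, L f0 (z i) + (2+ε)*γ := by
    intro f0 hf0
    filter_upwards [hae] with z hz
    obtain ⟨hfhatF, hermmin⟩ := hERM.2 z hz
    obtain ⟨j, hj⟩ := hfsnet (fhat z) hfhatF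
    have hLip : ∀ w ∈ S, |L (fhat z) w - L (fs j) w| ≤ γ := by
      intro w hw
      have h1' : L (fhat z) w - L (fs j) w
          = logLoss (w.2 * fhat z w.1) - logLoss (w.2 * fs j w.1) := by
        simp only [hLdef]; ring
      rw [h1']
      calc |logLoss (w.2 * fhat z w.1) - logLoss (w.2 * fs j w.1)|
          ≤ |w.2 * fhat z w.1 - w.2 * fs j w.1| := logLoss_lipschitz _ _
        _ = |fhat z w.1 - fs j w.1| := by rw [← mul_sub, abs_mul, habs2 w hw, one_mul]
        _ ≤ γ := hj w.1 hw.1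
    have hA : ∫ w, L (fhat z) w ∂P ≤ μj j + γ := by
      have hptw : ∀ᵐ w ∂P, L (fhat z) w ≤ L (fs j) w + γ := by
        filter_upwards [haeP] with w hw
        have := (abs_le.1 (hLip w hw)).2
        linarith
      calc ∫ w, L (fhat z) w ∂P ≤ ∫ w, (L (fs j) w + γ) ∂P :=
            integral_mono_ae (hLint _ hfhatF)
              ((hLint _ (hfsF j)).add (integrable_const γ)) hptw
        _ = μj j + γ := by
            rw [integral_add (hLint _ (hfsF j)) (integrable_const γ), integral_const]
            simp [hμjdef]
    have hB : ∑ i, L (fs j) (z i) ≤ (∑ i, L (fhat z) (z i)) + (n:ℝ)*γ := by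
      have hterm : ∀ i : Fin n, L (fs j) (z i) ≤ L (fhat z) (z i) + γ := by
        intro i
        have := (abs_le.1 (hLip (z i) (hz i))).1
        linarith
      calc ∑ i, L (fs j) (z i) ≤ ∑ i : Fin n, (L (fhat z) (z i) + γ) :=
            Finset.sum_le_sum fun i _ => hterm i
        _ = (∑ i, L (fhat z) (z i)) + (n:ℝ)*γ := by
            rw [Finset.sum_add_distrib, Finset.sum_const, Finset.card_univ,
              Fintype.card_fin, nsmul_eq_mul]
    have hC : ∑ i, L (fhat z) (z i) ≤ ∑ i, L f0 (z i) := by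
      have h := hermmin f0 hf0
      have e1 : ∑ i, L (fhat z) (z i)
          = (∑ i, logLoss ((z i).2 * fhat z ((z i).1))) - ∑ i, ψ (z i) := by
        simp only [hLdef]; rw [Finset.sum_sub_distrib]
      have e2 : ∑ i, L f0 (z i)
          = (∑ i, logLoss ((z i).2 * f0 ((z i).1))) - ∑ i, ψ (z i) := by
        simp only [hLdef]; rw [Finset.sum_sub_distrib]
      rw [e1, e2]
      linarith
    have hDle : Dj j z ≤ maxD z := Finset.le_sup' (fun j' => Dj j' z) (Finset.mem_univ j)
    have hcoef : (0:ℝ) ≤ (1+ε)/(n:ℝ) := by positivity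
    have hcn : (1+ε)/(n:ℝ) * ((n:ℝ)*γ) = (1+ε)*γ := by field_simp
    have hμeq : μj j = Dj j z + (1+ε)/(n:ℝ) * ∑ i, L (fs j) (z i) := by
      simp only [hDjdef]; ring
    have hEL := hELf _ hfhatF
    have hmul1 : (1+ε)/(n:ℝ) * ∑ i, L (fs j) (z i)
        ≤ (1+ε)/(n:ℝ) * ((∑ i, L f0 (z i)) + (n:ℝ)*γ) :=
      mul_le_mul_of_nonneg_left (by linarith) hcoef
    have hdist : (1+ε)/(n:ℝ) * ((∑ i, L f0 (z i)) + (n:ℝ)*γ)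
        = (1+ε)/(n:ℝ) * (∑ i, L f0 (z i)) + (1+ε)*γ := by
      rw [mul_add, hcn]
    calc jointLogRisk d P (fhat z) - ψbar = ∫ w, L (fhat z) w ∂P := hEL.symm
      _ ≤ μj j + γ := hA
      _ = Dj j z + (1+ε)/(n:ℝ) * ∑ i, L (fs j) (z i) + γ := by rw [hμeq]
      _ ≤ maxD z + ((1+ε)/(n:ℝ) * (∑ i, L f0 (z i)) + (1+ε)*γ) + γ := by
          rw [← hdist]
          exact add_le_add (add_le_add hDle hmul1) le_rfl
      _ = maxD z + (1+ε)/(n:ℝ) * ∑ i, L f0 (z i) + (2+ε)*γ := by ring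
  -- measurability and integrability of the left-hand side
  have hjointMeas : Measurable (fun z => jointLogRisk d P (fhat z)) := by
    have hFm : StronglyMeasurable
        (fun p : (Fin n → (Fin d → ℝ) × ℝ) × ((Fin d → ℝ) × ℝ) =>
          logLoss (p.2.2 * fhat p.1 p.2.1)) := by
      apply Measurable.stronglyMeasurable
      exact hcontLL.measurable.comp ((measurable_snd.snd).mul
        (hERM.1.comp (measurable_fst.prodMk (measurable_snd.fst))))
    exact hFm.integral_prod_right'.measurable
  have hψbarle : |ψbar| ≤ M := by
    rw [hψbar, ← Real.norm_eq_abs]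
    calc ‖∫ w, ψ w ∂P‖ ≤ ∫ w, ‖ψ w‖ ∂P := norm_integral_le_integral_norm _
      _ ≤ ∫ _w, M ∂P := by
          refine integral_mono_ae hψint.norm (integrable_const _) ?_
          filter_upwards [haeP] with w hw
          simpa [Real.norm_eq_abs] using h2b w hw
      _ = M := by simp
  have hLHSbd : ∀ᵐ z ∂(nSample d n P), ‖jointLogRisk d P (fhat z) - ψbar‖ ≤ 2*M := by
    filter_upwards [hae] with z hz
    obtain ⟨hfhatF, -⟩ := hERM.2 z hz
    have h1' : 0 ≤ jointLogRisk d P (fhat z) :=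
      integral_nonneg fun w => logLoss_nonneg _
    have h2' : jointLogRisk d P (fhat z) ≤ M := by
      calc jointLogRisk d P (fhat z) ≤ ∫ _w, M ∂P := by
            refine integral_mono_ae (hφint _ hfhatF) (integrable_const _) ?_
            filter_upwards [haeP] with w hw
            exact hφbd _ hfhatF w hw
        _ = M := by simp
    have h3' := abs_le.1 hψbarle
    rw [Real.norm_eq_abs, abs_le]
    constructor <;> linarith
  have hLHSint : Integrable (fun z => jointLogRisk d P (fhat z) - ψbar) (nSample d n P) :=
    Integrable.mono' (integrable_const (2*M))
      ((hjointMeas.sub measurable_const).aestronglyMeasurable) hLHSbd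
  -- integrating the oracle inequality
  have hIneq : ∀ f0 ∈ Fcls,
      ∫ z, (jointLogRisk d P (fhat z) - ψbar) ∂(nSample d n P)
        ≤ Real.log (W:ℝ) / lam + (2+ε)*γ + (1+ε) * (jointLogRisk d P f0 - ψbar) := by
    intro f0 hf0
    have hRHSint : Integrable
        (fun z => maxD z + (1+ε)/(n:ℝ) * ∑ i, L f0 (z i) + (2+ε)*γ) (nSample d n P) :=
      (hmaxDInt.add ((hsumInt f0 hf0).const_mul _)).add (integrable_const _)
    have h := integral_mono_ae hLHSint hRHSint (hOracle f0 hf0)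
    have heval : ∀ i : Fin n, ∫ z, L f0 (z i) ∂(nSample d n P) = ∫ w, L f0 w ∂P := by
      intro i
      unfold nSample
      exact integral_pi_eval P (L f0) i
    have hRHSval : ∫ z, (maxD z + (1+ε)/(n:ℝ) * ∑ i, L f0 (z i) + (2+ε)*γ) ∂(nSample d n P)
        = (∫ z, maxD z ∂(nSample d n P)) + (1+ε) * (jointLogRisk d P f0 - ψbar)
          + (2+ε)*γ := by
      have hI1 : Integrable
          (fun z : Fin n → (Fin d → ℝ) × ℝ => maxD z + (1+ε)/(n:ℝ) * ∑ i, L f0 (z i))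
          (nSample d n P) := hmaxDInt.add ((hsumInt f0 hf0).const_mul _)
      rw [integral_add hI1 (integrable_const ((2+ε)*γ)),
        integral_add hmaxDInt ((hsumInt f0 hf0).const_mul ((1+ε)/(n:ℝ))), integral_const,
        integral_const_mul, integral_finset_sum _ (fun i _ => hevalInt f0 hf0 i)]
      rw [Finset.sum_congr rfl (fun i _ => heval i), Finset.sum_const, Finset.card_univ,
        Fintype.card_fin, nsmul_eq_mul, hELf f0 hf0]
      simp only [measure_univ, probReal_univ, ENNReal.toReal_one, smul_eq_mul, one_mul]
      field_simp
    rw [hRHSval] at h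
    linarith [hmaxDle]
  -- passing to the infimum
  set Iinf := sInf {t | ∃ f ∈ Fcls, t = jointLogRisk d P f - ψbar} with hIinf
  have hsetne : {t | ∃ f ∈ Fcls, t = jointLogRisk d P f - ψbar}.Nonempty := by
    obtain ⟨f, hf⟩ := hFne
    exact ⟨jointLogRisk d P f - ψbar, f, hf, rfl⟩
  have hfinal1 : ∫ z, (jointLogRisk d P (fhat z) - ψbar) ∂(nSample d n P)
      ≤ Real.log (W:ℝ) / lam + (2+ε)*γ + (1+ε) * Iinf := by
    have hlb : ∀ t ∈ {t | ∃ f ∈ Fcls, t = jointLogRisk d P f - ψbar},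
        ((∫ z, (jointLogRisk d P (fhat z) - ψbar) ∂(nSample d n P))
          - Real.log (W:ℝ) / lam - (2+ε)*γ) / (1+ε) ≤ t := by
      rintro t ⟨f, hf, rfl⟩
      rw [div_le_iff₀ (by linarith : (0:ℝ) < 1+ε)]
      have := hIneq f hf
      linarith
    have h := le_csInf hsetne hlb
    rw [div_le_iff₀ (by linarith : (0:ℝ) < 1+ε)] at h
    rw [hIinf]
    linarith
  -- final numerical comparison
  have hlogW : 0 < Real.log (W:ℝ) := Real.log_pos hW'
  have hinv : Real.log (W:ℝ) / lam
      ≤ Real.log (W:ℝ) * ((1+ε)*b/(n:ℝ)) + Real.log (W:ℝ) * ((1+ε)^2*Γ/(ε*(n:ℝ))) := by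
    rcases min_cases ((n:ℝ) / ((1+ε)*b)) (ε*(n:ℝ) / ((1+ε)^2*Γ)) with ⟨heq, -⟩ | ⟨heq, -⟩
    · have he : Real.log (W:ℝ) / lam = Real.log (W:ℝ) * ((1+ε)*b/(n:ℝ)) := by
        rw [hlamdef, heq, div_div_eq_mul_div]
        ring
      rw [he]
      have hp : 0 ≤ Real.log (W:ℝ) * ((1+ε)^2*Γ/(ε*(n:ℝ))) := by positivity
      linarith
    · have he : Real.log (W:ℝ) / lam = Real.log (W:ℝ) * ((1+ε)^2*Γ/(ε*(n:ℝ))) := by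
        rw [hlamdef, heq, div_div_eq_mul_div]
        ring
      rw [he]
      have hp : 0 ≤ Real.log (W:ℝ) * ((1+ε)*b/(n:ℝ)) := by positivity
      linarith
  calc ∫ z, (jointLogRisk d P (fhat z) - ψbar) ∂(nSample d n P)
      ≤ Real.log (W:ℝ) / lam + (2+ε)*γ + (1+ε) * Iinf := hfinal1
    _ ≤ 80 * ((1 + ε) ^ 2 / ε) * (Γ * Real.log (W:ℝ) / (n:ℝ))
        + 20 * (1 + ε) * (M * Real.log (W:ℝ) / (n:ℝ))
        + 20 * (1 + ε) * Real.sqrt γ * Real.sqrt (Γ * Real.log (W:ℝ) / (n:ℝ))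
        + 4 * γ + (1 + ε) * Iinf := by
      have e1 : Real.log (W:ℝ) * ((1+ε)*b/(n:ℝ))
          = 2 * ((1+ε) * (M * Real.log (W:ℝ) / (n:ℝ))) := by
        rw [hbdef]; ring
      have e2 : Real.log (W:ℝ) * ((1+ε)^2*Γ/(ε*(n:ℝ)))
          = ((1+ε)^2/ε) * (Γ * Real.log (W:ℝ) / (n:ℝ)) := by ring
      have p1 : 0 ≤ (1+ε) * (M * Real.log (W:ℝ) / (n:ℝ)) := by positivity
      have p2 : 0 ≤ ((1+ε)^2/ε) * (Γ * Real.log (W:ℝ) / (n:ℝ)) := by positivity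
      have p3 : 0 ≤ 20 * (1 + ε) * Real.sqrt γ * Real.sqrt (Γ * Real.log (W:ℝ) / (n:ℝ)) := by
        positivity
      have hi := hinv
      rw [e1, e2] at hi
      have hεγ : ε * γ ≤ γ := by nlinarith
      linarith




end

end DNNLogistic
end

section
/- Let a ∈ (0,1) and let f, A, B be real numbers with A ≤ min{f, log(a/(1−a))} ≤ max{f, log(a/(1−a))} ≤ B. Then min{ 1/(4 + 2e^A + 2e^(−A)), 1/(4 + 2e^B + 2e^(−B)) } · (f − log(a/(1−a)))² ≤ a·φ(f) + (1−a)·φ(−f) − a·log(1/a) − (1−a)·log(1/(1−a)) ≤ sup{ 1/(4 + 2e^z + 2e^(−z)) : z ∈ [A,B] } · (f − log(a/(1−a)))² ≤ (1/8)·(f − log(a/(1−a)))². -/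
open MeasureTheory
open scoped ENNReal NNReal

namespace DNNLogistic

noncomputable section

private lemma mono_core {g g1 : ℝ → ℝ} (hg : ∀ t, HasDerivAt g (g1 t) t)
    {c f : ℝ} (hc : g1 c = 0)
    (hmono : MonotoneOn g1 (Set.Icc (min f c) (max f c))) : g c ≤ g f := by
  rcases le_total c f with h | h
  · have hmono' : MonotoneOn g1 (Set.Icc c f) := by
      rwa [min_eq_right h, max_eq_left h] at hmono
    have hm : MonotoneOn g (Set.Icc c f) := by
      apply monotoneOn_of_deriv_nonneg (convex_Icc c f)
        (fun x _ => (hg x).continuousAt.continuousWithinAt)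
        (fun x _ => (hg x).differentiableAt.differentiableWithinAt)
      intro x hx
      rw [interior_Icc] at hx
      rw [(hg x).deriv]
      have := hmono' ⟨le_refl c, h⟩ ⟨hx.1.le, hx.2.le⟩ hx.1.le
      linarith
    exact hm ⟨le_refl c, h⟩ ⟨h, le_refl f⟩ h
  · have hmono' : MonotoneOn g1 (Set.Icc f c) := by
      rwa [min_eq_left h, max_eq_right h] at hmono
    have hm : AntitoneOn g (Set.Icc f c) := by
      apply antitoneOn_of_deriv_nonpos (convex_Icc f c)
        (fun x _ => (hg x).continuousAt.continuousWithinAt)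
        (fun x _ => (hg x).differentiableAt.differentiableWithinAt)
      intro x hx
      rw [interior_Icc] at hx
      rw [(hg x).deriv]
      have := hmono' ⟨hx.1.le, hx.2.le⟩ ⟨h, le_refl c⟩ hx.2.le
      linarith
    exact hm ⟨le_refl f, h⟩ ⟨h, le_refl c⟩ h

/-- quadratic bounds -/
private lemma quad_bound {g g1 h : ℝ → ℝ} (hg : ∀ t, HasDerivAt g (g1 t) t)
    (hg1 : ∀ t, HasDerivAt g1 (h t) t) {c f m M : ℝ} (hc : g1 c = 0)
    (hm : ∀ s ∈ Set.Icc (min f c) (max f c), m ≤ h s)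
    (hM : ∀ s ∈ Set.Icc (min f c) (max f c), h s ≤ M) :
    m / 2 * (f - c) ^ 2 ≤ g f - g c ∧ g f - g c ≤ M / 2 * (f - c) ^ 2 := by
  have hsq : ∀ t : ℝ, HasDerivAt (fun t : ℝ => (t - c) ^ 2) (2 * (t - c)) t := by
    intro t
    have := ((hasDerivAt_id t).sub_const c).pow 2
    exact this.congr_deriv (by norm_num)
  constructor
  · -- lower bound via u = g - m/2 (·-c)^2
    have hu : ∀ t, HasDerivAt (fun t => g t - m / 2 * (t - c) ^ 2)
        (g1 t - m * (t - c)) t := by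
      intro t
      have := (hg t).sub ((hsq t).const_mul (m / 2))
      exact this.congr_deriv (by ring)
    have hu1 : ∀ t, HasDerivAt (fun t => g1 t - m * (t - c)) (h t - m) t := by
      intro t
      have := (hg1 t).sub (((hasDerivAt_id t).sub_const c).const_mul m)
      exact this.congr_deriv (by ring)
    have hmono : MonotoneOn (fun t => g1 t - m * (t - c)) (Set.Icc (min f c) (max f c)) := by
      apply monotoneOn_of_deriv_nonneg (convex_Icc _ _)
        (fun x _ => (hu1 x).continuousAt.continuousWithinAt)
        (fun x _ => (hu1 x).differentiableAt.differentiableWithinAt)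
      intro x hx
      rw [(hu1 x).deriv]
      have := hm x (interior_subset hx)
      linarith
    have := mono_core hu (c := c) (f := f) (by simp [hc]) hmono
    simp only [sub_self] at this
    nlinarith [this]
  · -- upper bound via w = M/2 (·-c)^2 - g
    have hu : ∀ t, HasDerivAt (fun t => M / 2 * (t - c) ^ 2 - g t)
        (M * (t - c) - g1 t) t := by
      intro t
      have := ((hsq t).const_mul (M / 2)).sub (hg t)
      exact this.congr_deriv (by ring)
    have hu1 : ∀ t, HasDerivAt (fun t => M * (t - c) - g1 t) (M - h t) t := by
      intro t
      have := (((hasDerivAt_id t).sub_const c).const_mul M).sub (hg1 t)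
      exact this.congr_deriv (by ring)
    have hmono : MonotoneOn (fun t => M * (t - c) - g1 t) (Set.Icc (min f c) (max f c)) := by
      apply monotoneOn_of_deriv_nonneg (convex_Icc _ _)
        (fun x _ => (hu1 x).continuousAt.continuousWithinAt)
        (fun x _ => (hu1 x).differentiableAt.differentiableWithinAt)
      intro x hx
      rw [(hu1 x).deriv]
      have := hM x (interior_subset hx)
      linarith
    have := mono_core hu (c := c) (f := f) (by simp [hc]) hmono
    simp only [sub_self] at this
    nlinarith [this]


private lemma exp_mul_exp_neg (z : ℝ) : Real.exp z * Real.exp (-z) = 1 := by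
  rw [← Real.exp_add]; simp

private lemma two_le_cosh (z : ℝ) : 2 ≤ Real.exp z + Real.exp (-z) := by
  nlinarith [sq_nonneg (Real.exp z - 1), Real.exp_pos z, exp_mul_exp_neg z]

private lemma cosh_le_cosh {x y : ℝ} (hx : 1 ≤ x) (hxy : x ≤ y) :
    x + x⁻¹ ≤ y + y⁻¹ := by
  have hx0 : (0:ℝ) < x := by linarith
  have hy0 : (0:ℝ) < y := by linarith
  have key : 0 ≤ (y - x) * (x * y - 1) := mul_nonneg (by linarith) (by nlinarith)
  have heq : y + y⁻¹ - (x + x⁻¹) = (y - x) * (x * y - 1) / (x * y) := by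
    field_simp; ring
  have := div_nonneg key (mul_pos hx0 hy0).le
  linarith [heq ▸ this]

private lemma cosh_le_max {A B s : ℝ} (h1 : A ≤ s) (h2 : s ≤ B) :
    Real.exp s + Real.exp (-s)
      ≤ max (Real.exp A + Real.exp (-A)) (Real.exp B + Real.exp (-B)) := by
  rcases le_total 0 s with hs | hs
  · refine le_max_of_le_right ?_
    rw [Real.exp_neg s, Real.exp_neg B]
    exact cosh_le_cosh (Real.one_le_exp hs) (Real.exp_le_exp.2 h2)
  · refine le_max_of_le_left ?_
    have h : Real.exp s + Real.exp (-s) = Real.exp (-s) + (Real.exp (-s))⁻¹ := by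
      rw [← Real.exp_neg, neg_neg]; ring
    have h' : Real.exp A + Real.exp (-A) = Real.exp (-A) + (Real.exp (-A))⁻¹ := by
      rw [← Real.exp_neg, neg_neg]; ring
    rw [h, h']
    exact cosh_le_cosh (Real.one_le_exp (by linarith)) (Real.exp_le_exp.2 (by linarith))

private lemma glog_hasDeriv (a : ℝ) (t : ℝ) :
    HasDerivAt (fun t => a * Real.log (1 + Real.exp (-t)) + (1 - a) * Real.log (1 + Real.exp t))
      (Real.exp t / (1 + Real.exp t) - a) t := by
  have h1 : HasDerivAt (fun t : ℝ => 1 + Real.exp (-t)) (-Real.exp (-t)) t := by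
    have := ((Real.hasDerivAt_exp (-t)).comp t (hasDerivAt_neg t)).const_add 1
    simpa using this
  have h2 : HasDerivAt (fun t : ℝ => 1 + Real.exp t) (Real.exp t) t :=
    (Real.hasDerivAt_exp t).const_add 1
  have hp1 : (0:ℝ) < 1 + Real.exp (-t) := by positivity
  have hp2 : (0:ℝ) < 1 + Real.exp t := by positivity
  have := ((h1.log hp1.ne').const_mul a).add ((h2.log hp2.ne').const_mul (1 - a))
  refine this.congr_deriv ?_
  have he : Real.exp (-t) = (Real.exp t)⁻¹ := Real.exp_neg t
  rw [he]
  field_simp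
  ring

private lemma sig_hasDeriv (t : ℝ) :
    HasDerivAt (fun t => Real.exp t / (1 + Real.exp t))
      (1 / (2 + Real.exp t + Real.exp (-t))) t := by
  have h2 : HasDerivAt (fun t : ℝ => 1 + Real.exp t) (Real.exp t) t :=
    (Real.hasDerivAt_exp t).const_add 1
  have hp2 : (0:ℝ) < 1 + Real.exp t := by positivity
  have := (Real.hasDerivAt_exp t).div h2 hp2.ne'
  refine this.congr_deriv ?_
  have he : Real.exp (-t) = (Real.exp t)⁻¹ := Real.exp_neg t
  rw [he]
  have hp : (0:ℝ) < Real.exp t := Real.exp_pos t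
  field_simp
  ring



/-- Lemma A.10: two-sided quadratic bounds for the excess pointwise
logistic risk. -/
theorem statement6 (a f A B : ℝ) (ha : a ∈ Set.Ioo (0 : ℝ) 1)
    (hA : A ≤ min f (Real.log (a / (1 - a)))) (hB : max f (Real.log (a / (1 - a))) ≤ B) :
    min (1 / (4 + 2 * Real.exp A + 2 * Real.exp (-A)))
        (1 / (4 + 2 * Real.exp B + 2 * Real.exp (-B)))
      * (f - Real.log (a / (1 - a))) ^ 2
      ≤ a * logLoss f + (1 - a) * logLoss (-f)
          - a * Real.log (1 / a) - (1 - a) * Real.log (1 / (1 - a)) ∧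
    a * logLoss f + (1 - a) * logLoss (-f)
        - a * Real.log (1 / a) - (1 - a) * Real.log (1 / (1 - a))
      ≤ sSup {s | ∃ z ∈ Set.Icc A B, s = 1 / (4 + 2 * Real.exp z + 2 * Real.exp (-z))}
          * (f - Real.log (a / (1 - a))) ^ 2 ∧
    sSup {s | ∃ z ∈ Set.Icc A B, s = 1 / (4 + 2 * Real.exp z + 2 * Real.exp (-z))}
        * (f - Real.log (a / (1 - a))) ^ 2
      ≤ (1 / 8) * (f - Real.log (a / (1 - a))) ^ 2 := by
  obtain ⟨ha0, ha1⟩ := ha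
  have h1a : (0:ℝ) < 1 - a := by linarith
  set c := Real.log (a / (1 - a)) with hcdef
  have hq : (0:ℝ) < a / (1 - a) := by positivity
  have hec : Real.exp c = a / (1 - a) := Real.exp_log hq
  have hecn : Real.exp (-c) = (1 - a) / a := by
    rw [Real.exp_neg, hec]
    rw [inv_div]
  set g : ℝ → ℝ := fun t => a * Real.log (1 + Real.exp (-t))
      + (1 - a) * Real.log (1 + Real.exp t) with hgdef
  set g1 : ℝ → ℝ := fun t => Real.exp t / (1 + Real.exp t) - a with hg1def
  set h : ℝ → ℝ := fun t => 1 / (2 + Real.exp t + Real.exp (-t)) with hhdef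
  set k : ℝ → ℝ := fun z => 1 / (4 + 2 * Real.exp z + 2 * Real.exp (-z)) with hkdef
  have hg : ∀ t, HasDerivAt g (g1 t) t := glog_hasDeriv a
  have hg1 : ∀ t, HasDerivAt g1 (h t) t := fun t => (sig_hasDeriv t).sub_const a
  have hc0 : g1 c = 0 := by
    simp only [hg1def, hec]
    field_simp
    ring
  have hgc : g c = a * Real.log (1 / a) + (1 - a) * Real.log (1 / (1 - a)) := by
    simp only [hgdef, hec, hecn]
    have e1 : 1 + (1 - a) / a = 1 / a := by field_simp; ring
    have e2 : 1 + a / (1 - a) = 1 / (1 - a) := by field_simp; ring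
    rw [e1, e2]
  have hexc : a * logLoss f + (1 - a) * logLoss (-f)
      - a * Real.log (1 / a) - (1 - a) * Real.log (1 / (1 - a)) = g f - g c := by
    rw [hgc]
    simp only [logLoss, hgdef, neg_neg]
    ring
  have hsub : Set.Icc (min f c) (max f c) ⊆ Set.Icc A B := Set.Icc_subset_Icc hA hB
  have hAB : A ≤ B := le_trans hA (le_trans min_le_max hB)
  set S : Set ℝ := {s | ∃ z ∈ Set.Icc A B, s = 1 / (4 + 2 * Real.exp z + 2 * Real.exp (-z))}
    with hSdef
  have hSne : S.Nonempty := ⟨k A, A, ⟨le_refl A, hAB⟩, rfl⟩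
  have hS8 : ∀ s ∈ S, s ≤ 1 / 8 := by
    rintro s ⟨z, _, rfl⟩
    have := two_le_cosh z
    apply one_div_le_one_div_of_le
    · norm_num
    · linarith
  have hbdd : BddAbove S := ⟨1 / 8, fun s hs => hS8 s hs⟩
  have hsup8 : sSup S ≤ 1 / 8 := csSup_le hSne hS8
  have hhk : ∀ s : ℝ, h s = 2 * k s := by
    intro s
    have hpos : (0:ℝ) < 2 + Real.exp s + Real.exp (-s) := by positivity
    simp only [hhdef, hkdef]
    rw [mul_one_div, div_eq_div_iff hpos.ne' (by positivity : (0:ℝ) < 4 + 2 * Real.exp s + 2 * Real.exp (-s)).ne']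
    ring
  have hM : ∀ s ∈ Set.Icc (min f c) (max f c), h s ≤ 2 * sSup S := by
    intro s hs
    have hz := hsub hs
    have hkS : k s ∈ S := ⟨s, hz, rfl⟩
    have := le_csSup hbdd hkS
    rw [hhk s]
    linarith
  have hm : ∀ s ∈ Set.Icc (min f c) (max f c), 2 * min (k A) (k B) ≤ h s := by
    intro s hs
    have hz := hsub hs
    have hco := cosh_le_max hz.1 hz.2
    have hps : (0:ℝ) < 4 + 2 * Real.exp s + 2 * Real.exp (-s) := by positivity
    have hks : min (k A) (k B) ≤ k s := by
      rcases max_cases (Real.exp A + Real.exp (-A)) (Real.exp B + Real.exp (-B)) with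
        ⟨hmx, _⟩ | ⟨hmx, _⟩
      · refine le_trans (min_le_left _ _) ?_
        apply one_div_le_one_div_of_le hps
        rw [hmx] at hco
        linarith
      · refine le_trans (min_le_right _ _) ?_
        apply one_div_le_one_div_of_le hps
        rw [hmx] at hco
        linarith
    rw [hhk s]
    linarith
  obtain ⟨hlow, hup⟩ := quad_bound hg hg1 hc0 hm hM
  refine ⟨?_, ?_, ?_⟩
  · rw [hexc]
    calc min (k A) (k B) * (f - c) ^ 2 = 2 * min (k A) (k B) / 2 * (f - c) ^ 2 := by ring
    _ ≤ g f - g c := hlow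
  · rw [hexc]
    calc g f - g c ≤ 2 * sSup S / 2 * (f - c) ^ 2 := hup
    _ = sSup S * (f - c) ^ 2 := by ring
  · exact mul_le_mul_of_nonneg_right hsup8 (sq_nonneg _)


end

end DNNLogistic
end

section
/- Let δ ∈ (0,1/2), a ∈ [δ, 1−δ], and f ∈ [−log((1−δ)/δ), log((1−δ)/δ)]. Define H(a,f) = a·(φ(f) − φ(log(a/(1−a))))² + (1−a)·(φ(−f) − φ(−log(a/(1−a))))² and G(a,f) = a·φ(f) + (1−a)·φ(−f) − a·log(1/a) − (1−a)·log(1/(1−a)). Then H(a,f) ≤ 5000·(log δ)²·G(a,f). -/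
open MeasureTheory
open scoped ENNReal NNReal

namespace DNNLogistic

noncomputable section

lemma aux_ratio (s t : ℝ) (hs : 0 ≤ s) (hts : t ≤ s) :
    t ^ 2 ≤ (4 + s) * (t + Real.exp (-t) - 1) := by
  rcases le_or_gt t 2 with h | h
  · have h1 : 1 - t / 2 ≤ Real.exp (-(t / 2)) := by
      have := Real.add_one_le_exp (-(t / 2)); linarith
    have hnn : (0:ℝ) ≤ 1 - t / 2 := by linarith
    have e2 : Real.exp (-(t / 2)) * Real.exp (-(t / 2)) = Real.exp (-t) := by
      rw [← Real.exp_add]; ring_nf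
    have h2 : (1 - t / 2) * (1 - t / 2) ≤ Real.exp (-t) := by
      calc (1 - t / 2) * (1 - t / 2) ≤ Real.exp (-(t / 2)) * Real.exp (-(t / 2)) :=
            mul_le_mul h1 h1 hnn (Real.exp_pos _).le
        _ = Real.exp (-t) := e2
    nlinarith [sq_nonneg t, mul_nonneg hs (sq_nonneg t)]
  · have h1 : (0:ℝ) < Real.exp (-t) := Real.exp_pos _
    nlinarith [mul_nonneg (sub_nonneg.2 hts) (by linarith : (0:ℝ) ≤ t - 1)]

lemma aux_term (s x y : ℝ) (hx : 0 < x) (hy : 0 < y) (hs : 0 ≤ s)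
    (ht : Real.log x - Real.log y ≤ s) :
    x * (Real.log x - Real.log y) ^ 2
      ≤ (4 + s) * (x * (Real.log x - Real.log y) + y - x) := by
  set t := Real.log x - Real.log y with htdef
  have hxy : y = x * Real.exp (-t) := by
    rw [htdef, neg_sub, Real.exp_sub, Real.exp_log hx, Real.exp_log hy]
    field_simp
  have key := aux_ratio s t hs ht
  have h2 : (4 + s) * (x * t + x * Real.exp (-t) - x)
      = x * ((4 + s) * (t + Real.exp (-t) - 1)) := by ring
  have h3 : x * t ^ 2 ≤ x * ((4 + s) * (t + Real.exp (-t) - 1)) :=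
    mul_le_mul_of_nonneg_left key hx.le
  rw [hxy]; linarith

lemma aux_key (δ a b : ℝ) (hδ0 : 0 < δ) (hδ1 : δ < 1 / 2) (ha : δ ≤ a) (ha' : a ≤ 1 - δ)
    (hb : δ ≤ b) (hb' : b ≤ 1 - δ) :
    a * (Real.log a - Real.log b) ^ 2 + (1 - a) * (Real.log (1 - a) - Real.log (1 - b)) ^ 2
      ≤ 5000 * (Real.log δ) ^ 2 *
        (a * (Real.log a - Real.log b) + (1 - a) * (Real.log (1 - a) - Real.log (1 - b))) := by
  have ha0 : 0 < a := lt_of_lt_of_le hδ0 ha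
  have hb0 : 0 < b := lt_of_lt_of_le hδ0 hb
  have h1a : 0 < 1 - a := by linarith
  have h1b : 0 < 1 - b := by linarith
  set s := -Real.log δ with hsdef
  have hlogδ : Real.log δ < 0 := Real.log_neg hδ0 (by linarith)
  have hs0 : 0 < s := by rw [hsdef]; linarith
  -- t bounds
  have hloga : Real.log a ≤ 0 := Real.log_nonpos ha0.le (by linarith)
  have hlog1a : Real.log (1 - a) ≤ 0 := Real.log_nonpos h1a.le (by linarith)
  have hlogδb : Real.log δ ≤ Real.log b := Real.log_le_log hδ0 hb
  have hlogδ1b : Real.log δ ≤ Real.log (1 - b) := Real.log_le_log hδ0 (by linarith)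
  have ht1 : Real.log a - Real.log b ≤ s := by rw [hsdef]; linarith
  have ht2 : Real.log (1 - a) - Real.log (1 - b) ≤ s := by rw [hsdef]; linarith
  have T1 := aux_term s a b ha0 hb0 hs0.le ht1
  have T2 := aux_term s (1 - a) (1 - b) h1a h1b hs0.le ht2
  -- positivity of each divergence piece
  have hpos : (0:ℝ) < 4 + s := by linarith
  have hG1 : 0 ≤ a * (Real.log a - Real.log b) + b - a := by
    nlinarith [mul_nonneg ha0.le (sq_nonneg (Real.log a - Real.log b))]
  have hG2 : 0 ≤ (1 - a) * (Real.log (1 - a) - Real.log (1 - b)) + (1 - b) - (1 - a) := by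
    nlinarith [mul_nonneg h1a.le (sq_nonneg (Real.log (1 - a) - Real.log (1 - b)))]
  have hG : 0 ≤ a * (Real.log a - Real.log b)
      + (1 - a) * (Real.log (1 - a) - Real.log (1 - b)) := by linarith
  -- 4 + s ≤ 5000 s²
  have hs2 : (0.6931471803 : ℝ) ≤ s := by
    have h2 : Real.log δ ≤ Real.log (1 / 2) := Real.log_le_log hδ0 (by linarith)
    have h3 : Real.log (1 / 2) = -Real.log 2 := by rw [one_div, Real.log_inv]
    have h4 := Real.log_two_gt_d9
    rw [hsdef]; rw [h3] at h2; linarith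
  have hc : 4 + s ≤ 5000 * s ^ 2 := by nlinarith
  have hsq : (Real.log δ) ^ 2 = s ^ 2 := by rw [hsdef]; ring
  rw [hsq]
  nlinarith [mul_le_mul_of_nonneg_right hc hG]


/-- Lemma A.11: variance-type bound for the logistic loss. -/
theorem statement9 (δ a f : ℝ) (hδ : δ ∈ Set.Ioo (0 : ℝ) (1 / 2))
    (ha : a ∈ Set.Icc δ (1 - δ))
    (hf : f ∈ Set.Icc (-Real.log ((1 - δ) / δ)) (Real.log ((1 - δ) / δ))) :
    a * (logLoss f - logLoss (Real.log (a / (1 - a)))) ^ 2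
        + (1 - a) * (logLoss (-f) - logLoss (-Real.log (a / (1 - a)))) ^ 2
      ≤ 5000 * (Real.log δ) ^ 2 *
          (a * logLoss f + (1 - a) * logLoss (-f)
            - a * Real.log (1 / a) - (1 - a) * Real.log (1 / (1 - a))) := by
  obtain ⟨hδ0, hδ1⟩ := hδ
  obtain ⟨ha1, ha2⟩ := ha
  obtain ⟨hf1, hf2⟩ := hf
  have ha0 : 0 < a := lt_of_lt_of_le hδ0 ha1
  have h1a : 0 < 1 - a := by linarith
  have hE : 0 < Real.exp (-f) := Real.exp_pos _
  have hden : 0 < 1 + Real.exp (-f) := by linarith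
  set b := 1 / (1 + Real.exp (-f)) with hbdef
  have hb0 : 0 < b := by positivity
  have hratpos : (0:ℝ) < (1 - δ) / δ := div_pos (by linarith) hδ0
  -- bounds on b
  have hEub : Real.exp (-f) ≤ (1 - δ) / δ := by
    have : Real.exp (-f) ≤ Real.exp (Real.log ((1 - δ) / δ)) :=
      Real.exp_le_exp.2 (by linarith)
    rwa [Real.exp_log hratpos] at this
  have hElb : δ / (1 - δ) ≤ Real.exp (-f) := by
    have : Real.exp (-Real.log ((1 - δ) / δ)) ≤ Real.exp (-f) :=
      Real.exp_le_exp.2 (by linarith)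
    rwa [Real.exp_neg, Real.exp_log hratpos, inv_div] at this
  have hbl : δ ≤ b := by
    rw [hbdef, le_div_iff₀ hden]
    have : δ * (1 + Real.exp (-f)) ≤ δ * (1 + (1 - δ) / δ) := by nlinarith
    have h2 : δ * (1 + (1 - δ) / δ) = 1 := by field_simp; ring
    linarith
  have hbu : b ≤ 1 - δ := by
    rw [hbdef, div_le_iff₀ hden]
    have : (1 - δ) * (1 + δ / (1 - δ)) ≤ (1 - δ) * (1 + Real.exp (-f)) := by nlinarith
    have hne : (1:ℝ) - δ ≠ 0 := by linarith
    have h2 : (1 - δ) * (1 + δ / (1 - δ)) = 1 := by field_simp; ring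
    linarith
  have h1b : 0 < 1 - b := by linarith
  -- express the four logLoss values
  have L1 : logLoss f = -Real.log b := by
    rw [hbdef, one_div, Real.log_inv, neg_neg]; rfl
  have hb1eq : 1 - b = Real.exp (-f) / (1 + Real.exp (-f)) := by
    rw [hbdef]; field_simp; ring
  have L2 : logLoss (-f) = -Real.log (1 - b) := by
    rw [hb1eq, Real.log_div (ne_of_gt hE) (ne_of_gt hden), Real.log_exp]
    unfold logLoss
    rw [neg_neg]
    have hprod : (1:ℝ) + Real.exp f = Real.exp f * (1 + Real.exp (-f)) := by
      have hz : f + -f = 0 := by ring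
      rw [mul_add, mul_one, ← Real.exp_add, hz, Real.exp_zero]; ring
    rw [hprod, Real.log_mul (Real.exp_ne_zero f) (ne_of_gt hden), Real.log_exp]; ring
  have hexpstar : Real.exp (-Real.log (a / (1 - a))) = (1 - a) / a := by
    rw [Real.exp_neg, Real.exp_log (by positivity), inv_div]
  have L3 : logLoss (Real.log (a / (1 - a))) = -Real.log a := by
    unfold logLoss
    rw [hexpstar]
    have e1 : (1:ℝ) + (1 - a) / a = 1 / a := by field_simp; ring
    rw [e1, one_div, Real.log_inv]
  have L4 : logLoss (-Real.log (a / (1 - a))) = -Real.log (1 - a) := by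
    unfold logLoss
    rw [neg_neg, Real.exp_log (by positivity)]
    have e1 : (1:ℝ) + a / (1 - a) = 1 / (1 - a) := by field_simp; ring
    rw [e1, one_div, Real.log_inv]
  have i1 : Real.log (1 / a) = -Real.log a := by rw [one_div, Real.log_inv]
  have i2 : Real.log (1 / (1 - a)) = -Real.log (1 - a) := by rw [one_div, Real.log_inv]
  rw [L1, L2, L3, L4, i1, i2]
  have key := aux_key δ a b hδ0 hδ1 ha1 ha2 hbl hbu
  nlinarith [key]

end

end DNNLogistic
end

section
/- Let η₀ ∈ (0,1), F₀ ∈ (0, log((1+η₀)/(1−η₀))), a ∈ [−F₀, F₀], and e ∈ [0,1] with |2e − 1| > η₀. Set s = 1 if 2e − 1 > 0 and s = −1 if 2e − 1 < 0, and let D = ((1−η₀)/2)·φ′(−F₀) − ((1+η₀)/2)·φ′(F₀), where φ′(t) = −1/(1+e^t) is the derivative of the logistic loss. Then 0 ≤ |a − F₀·s|·D ≤ |a − F₀·s|·D + (1/(2·(e^(−F₀) + e^(F₀) + 2)))·(a − F₀·s)² ≤ e·(φ(a) − φ(F₀·s)) + (1−e)·(φ(−a) − φ(−F₀·s)) ≤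 |a − F₀·s| + F₀². -/
open MeasureTheory
open scoped ENNReal NNReal

namespace DNNLogistic

noncomputable section

lemma hasDerivAt_logLoss (t : ℝ) : HasDerivAt logLoss (-(1 / (1 + Real.exp t))) t := by
  have h1 : HasDerivAt (fun t : ℝ => 1 + Real.exp (-t)) (-Real.exp (-t)) t := by
    simpa using ((Real.hasDerivAt_exp (-t)).comp t ((hasDerivAt_id t).neg)).const_add 1
  have h2 : (1 : ℝ) + Real.exp (-t) ≠ 0 := by positivity
  have h3 := h1.log h2
  have hval : -Real.exp (-t) / (1 + Real.exp (-t)) = -(1 / (1 + Real.exp t)) := by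
    rw [Real.exp_neg]
    have : Real.exp t ≠ 0 := (Real.exp_pos t).ne'
    field_simp
    ring
  rw [hval] at h3
  exact h3

lemma hasDerivAt_logLoss_neg (t : ℝ) :
    HasDerivAt (fun t => logLoss (-t)) (1 / (1 + Real.exp (-t))) t := by
  simpa [Function.comp_def] using (hasDerivAt_logLoss (-t)).comp t ((hasDerivAt_id t).neg)

lemma hasDerivAt_inv_one_add_exp (t : ℝ) :
    HasDerivAt (fun t : ℝ => 1 / (1 + Real.exp t))
      (-(Real.exp t / (1 + Real.exp t) ^ 2)) t := by
  have h : HasDerivAt (fun t : ℝ => 1 + Real.exp t) (Real.exp t) t :=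
    (Real.hasDerivAt_exp t).const_add 1
  have h2 : (1 : ℝ) + Real.exp t ≠ 0 := by positivity
  simpa [one_div, neg_div, Pi.inv_def] using h.inv h2

lemma hasDerivAt_inv_one_add_exp_neg (t : ℝ) :
    HasDerivAt (fun t : ℝ => 1 / (1 + Real.exp (-t)))
      (Real.exp (-t) / (1 + Real.exp (-t)) ^ 2) t := by
  simpa [Function.comp_def] using (hasDerivAt_inv_one_add_exp (-t)).comp t ((hasDerivAt_id t).neg)

lemma mono_aux (p c : ℝ) (t : ℝ) :
    HasDerivAt (fun t => p * (-(1 / (1 + Real.exp t))) + (1 - p) * (1 / (1 + Real.exp (-t))) - c * t)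
      (1 / (Real.exp (-t) + Real.exp t + 2) - c) t := by
  have h := (((hasDerivAt_inv_one_add_exp t).neg.const_mul p).add
      ((hasDerivAt_inv_one_add_exp_neg t).const_mul (1 - p))).sub ((hasDerivAt_id t).const_mul c)
  refine h.congr_deriv ?_
  have hE : Real.exp t ≠ 0 := (Real.exp_pos t).ne'
  have hE1 : (1:ℝ) + Real.exp t ≠ 0 := by positivity
  have hE2 : (1:ℝ) + Real.exp (-t) ≠ 0 := by positivity
  have hE3 : Real.exp (-t) + Real.exp t + 2 ≠ 0 := by positivity
  rw [Real.exp_neg] at *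
  field_simp
  ring

lemma Phi_deriv (p Dq c F₀ : ℝ) (t : ℝ) :
    HasDerivAt (fun t => p * logLoss t + (1 - p) * logLoss (-t) + Dq * t - c / 2 * (t - F₀) ^ 2)
      (p * (-(1 / (1 + Real.exp t))) + (1 - p) * (1 / (1 + Real.exp (-t))) + Dq - c * (t - F₀)) t := by
  have hsq : HasDerivAt (fun t : ℝ => c / 2 * (t - F₀) ^ 2) (c * (t - F₀)) t := by
    have := (((hasDerivAt_id t).sub_const F₀).pow 2).const_mul (c / 2)
    refine this.congr_deriv ?_
    simp only [id_eq]
    ring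
  have h := ((((hasDerivAt_logLoss t).const_mul p).add
      ((hasDerivAt_logLoss_neg t).const_mul (1 - p))).add
      ((hasDerivAt_id t).const_mul Dq)).sub hsq
  refine h.congr_deriv ?_
  ring

lemma logLoss_sub_le_s11 (x y : ℝ) : logLoss x - logLoss y ≤ |x - y| := by
  have hd : ∀ t ∈ Set.univ, HasDerivWithinAt logLoss (-(1 / (1 + Real.exp t))) Set.univ t :=
    fun t _ => (hasDerivAt_logLoss t).hasDerivWithinAt
  have hb : ∀ t ∈ (Set.univ : Set ℝ), ‖-(1 / (1 + Real.exp t))‖ ≤ 1 := by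
    intro t _
    rw [norm_neg, Real.norm_eq_abs, abs_of_nonneg (by positivity)]
    rw [div_le_one (by positivity)]
    nlinarith [Real.exp_pos t]
  have := convex_univ.norm_image_sub_le_of_norm_hasDerivWithin_le hd hb
    (Set.mem_univ y) (Set.mem_univ x)
  rw [Real.norm_eq_abs, Real.norm_eq_abs] at this
  calc logLoss x - logLoss y ≤ |logLoss x - logLoss y| := le_abs_self _
    _ ≤ 1 * |x - y| := this
    _ = |x - y| := one_mul _

lemma key (η₀ F₀ a p : ℝ) (hη0 : 0 < η₀) (hη1 : η₀ < 1)
    (hF0 : 0 < F₀) (hF1 : F₀ < Real.log ((1 + η₀) / (1 - η₀)))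
    (ha1 : -F₀ ≤ a) (ha2 : a ≤ F₀) (hp1 : (1 + η₀) / 2 < p) (hp2 : p ≤ 1)
    (Dq : ℝ)
    (hD : Dq = (1 - η₀) / 2 * (-(1 / (1 + Real.exp (-F₀))))
        - (1 + η₀) / 2 * (-(1 / (1 + Real.exp F₀)))) :
    0 ≤ Dq ∧
    (F₀ - a) * Dq + 1 / (2 * (Real.exp (-F₀) + Real.exp F₀ + 2)) * (a - F₀) ^ 2
      ≤ p * (logLoss a - logLoss F₀) + (1 - p) * (logLoss (-a) - logLoss (-F₀)) ∧
    p * (logLoss a - logLoss F₀) + (1 - p) * (logLoss (-a) - logLoss (-F₀))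
      ≤ (F₀ - a) + F₀ ^ 2 := by
  have hEpos : 0 < Real.exp F₀ := Real.exp_pos _
  have hE'pos : 0 < Real.exp (-F₀) := Real.exp_pos _
  have hEE : Real.exp F₀ * Real.exp (-F₀) = 1 := by
    rw [← Real.exp_add]; simp
  have hη1' : 0 < 1 - η₀ := by linarith
  have hA : (0:ℝ) < 1 + Real.exp (-F₀) := by positivity
  have hB : (0:ℝ) < 1 + Real.exp F₀ := by positivity
  -- D ≥ 0
  have hratio : Real.exp F₀ < (1 + η₀) / (1 - η₀) := by
    have h0 : (0:ℝ) < (1 + η₀) / (1 - η₀) := by positivity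
    calc Real.exp F₀ < Real.exp (Real.log ((1 + η₀) / (1 - η₀))) := Real.exp_lt_exp.mpr hF1
      _ = _ := Real.exp_log h0
  have hcross : (1 - η₀) * (1 + Real.exp F₀) < (1 + η₀) * (1 + Real.exp (-F₀)) := by
    have h1 : Real.exp F₀ * (1 - η₀) < 1 + η₀ := (lt_div_iff₀ hη1').mp hratio
    nlinarith [mul_lt_mul_of_pos_right h1 hE'pos]
  have hDpos : 0 ≤ Dq := by
    have h1 : (1 - η₀) / (1 + Real.exp (-F₀)) ≤ (1 + η₀) / (1 + Real.exp F₀) := by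
      rw [div_le_div_iff₀ hA hB]; nlinarith [hcross]
    have h2 : Dq = ((1 + η₀) / (1 + Real.exp F₀) - (1 - η₀) / (1 + Real.exp (-F₀))) / 2 := by
      rw [hD]; ring
    rw [h2]; linarith
  refine ⟨hDpos, ?_, ?_⟩
  · -- strong-convexity lower bound
    set c : ℝ := 1 / (Real.exp (-F₀) + Real.exp F₀ + 2) with hc
    have hmono : MonotoneOn
        (fun t => p * (-(1 / (1 + Real.exp t))) + (1 - p) * (1 / (1 + Real.exp (-t))) - c * t)
        (Set.Icc (-F₀) F₀) := by
      apply monotoneOn_of_deriv_nonneg (convex_Icc _ _)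
      · exact (Differentiable.continuous (fun x => (mono_aux p c x).differentiableAt)).continuousOn
      · intro x _
        exact (mono_aux p c x).differentiableAt.differentiableWithinAt
      · intro x hx
        rw [interior_Icc] at hx
        rw [(mono_aux p c x).deriv]
        have hx1 : Real.exp x ≤ Real.exp F₀ := Real.exp_le_exp.mpr hx.2.le
        have hx2 : Real.exp (-x - F₀) ≤ 1 := Real.exp_le_one_iff.mpr (by linarith [hx.1])
        have e4 : Real.exp F₀ * Real.exp (-x - F₀) = Real.exp (-x) := by
          rw [← Real.exp_add]; ring_nf
        have e5 : Real.exp x * Real.exp (-x - F₀) = Real.exp (-F₀) := by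
          rw [← Real.exp_add]; ring_nf
        have hprod : 0 ≤ (Real.exp F₀ - Real.exp x) * (1 - Real.exp (-x - F₀)) :=
          mul_nonneg (by linarith) (by linarith)
        have hsum : Real.exp (-x) + Real.exp x + 2 ≤ Real.exp (-F₀) + Real.exp F₀ + 2 := by
          nlinarith [hprod, e4, e5]
        have hxpos : (0:ℝ) < Real.exp (-x) + Real.exp x + 2 := by positivity
        have := one_div_le_one_div_of_le hxpos hsum
        rw [hc]
        linarith
    have hend : p * (-(1 / (1 + Real.exp F₀))) + (1 - p) * (1 / (1 + Real.exp (-F₀))) + Dq ≤ 0 := by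
      rw [hD]
      have h1 : ((1 + η₀) / 2 - p) * (1 / (1 + Real.exp F₀)) ≤ 0 :=
        mul_nonpos_of_nonpos_of_nonneg (by linarith) (by positivity)
      have h2 : ((1 - p) - (1 - η₀) / 2) * (1 / (1 + Real.exp (-F₀))) ≤ 0 :=
        mul_nonpos_of_nonpos_of_nonneg (by linarith) (by positivity)
      nlinarith [h1, h2]
    have hanti : AntitoneOn
        (fun t => p * logLoss t + (1 - p) * logLoss (-t) + Dq * t - c / 2 * (t - F₀) ^ 2)
        (Set.Icc (-F₀) F₀) := by
      apply antitoneOn_of_deriv_nonpos (convex_Icc _ _)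
      · exact (Differentiable.continuous
          (fun x => (Phi_deriv p Dq c F₀ x).differentiableAt)).continuousOn
      · intro x _
        exact (Phi_deriv p Dq c F₀ x).differentiableAt.differentiableWithinAt
      · intro x hx
        rw [interior_Icc] at hx
        rw [(Phi_deriv p Dq c F₀ x).deriv]
        have hmx := hmono (Set.mem_Icc.mpr ⟨hx.1.le, hx.2.le⟩)
          (Set.mem_Icc.mpr ⟨by linarith, le_refl F₀⟩) hx.2.le
        simp only at hmx
        nlinarith [hmx, hend]
    have hfin := hanti (Set.mem_Icc.mpr ⟨ha1, ha2⟩)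
      (Set.mem_Icc.mpr ⟨by linarith, le_refl F₀⟩) ha2
    simp only at hfin
    have hcc : 1 / (2 * (Real.exp (-F₀) + Real.exp F₀ + 2)) = c / 2 := by
      rw [hc, div_div, mul_comm]
    rw [hcc]
    linarith [hfin]
  · -- Lipschitz upper bound
    have l1 : logLoss a - logLoss F₀ ≤ F₀ - a := by
      have := logLoss_sub_le_s11 a F₀
      rw [abs_of_nonpos (by linarith)] at this
      linarith
    have l2 : logLoss (-a) - logLoss (-F₀) ≤ F₀ - a := by
      have := logLoss_sub_le_s11 (-a) (-F₀)
      rw [show -a - -F₀ = F₀ - a by ring, abs_of_nonneg (by linarith)] at this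
      linarith
    have hp0 : 0 ≤ p := by linarith
    have hp1' : 0 ≤ 1 - p := by linarith
    have m1 := mul_le_mul_of_nonneg_left l1 hp0
    have m2 := mul_le_mul_of_nonneg_left l2 hp1'
    linarith [m1, m2, sq_nonneg F₀]

/-- Lemma 5.7: pointwise bounds around `F₀ · sgn(2e - 1)`;
here `p` plays the role of the conditional probability value `e`. -/
theorem statement11 (η₀ F₀ a p : ℝ) (hη₀ : η₀ ∈ Set.Ioo (0 : ℝ) 1)
    (hF₀ : F₀ ∈ Set.Ioo (0 : ℝ) (Real.log ((1 + η₀) / (1 - η₀))))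
    (ha : a ∈ Set.Icc (-F₀) F₀) (hp : p ∈ Set.Icc (0 : ℝ) 1) (hpη : η₀ < |2 * p - 1|)
    (s : ℝ) (hs : s = if 0 < 2 * p - 1 then 1 else -1)
    (Dq : ℝ)
    (hD : Dq = (1 - η₀) / 2 * (-(1 / (1 + Real.exp (-F₀))))
        - (1 + η₀) / 2 * (-(1 / (1 + Real.exp F₀)))) :
    0 ≤ |a - F₀ * s| * Dq ∧
    |a - F₀ * s| * Dq
      ≤ |a - F₀ * s| * Dq
          + 1 / (2 * (Real.exp (-F₀) + Real.exp F₀ + 2)) * (a - F₀ * s) ^ 2 ∧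
    |a - F₀ * s| * Dq + 1 / (2 * (Real.exp (-F₀) + Real.exp F₀ + 2)) * (a - F₀ * s) ^ 2
      ≤ p * (logLoss a - logLoss (F₀ * s)) + (1 - p) * (logLoss (-a) - logLoss (-(F₀ * s))) ∧
    p * (logLoss a - logLoss (F₀ * s)) + (1 - p) * (logLoss (-a) - logLoss (-(F₀ * s)))
      ≤ |a - F₀ * s| + F₀ ^ 2 := by
  obtain ⟨hη0, hη1⟩ := hη₀
  obtain ⟨hF0, hF1⟩ := hF₀
  obtain ⟨ha1, ha2⟩ := ha
  obtain ⟨hp0, hp1⟩ := hp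
  by_cases hcase : 0 < 2 * p - 1
  · have hs1 : s = 1 := by rw [hs, if_pos hcase]
    have habs' : |2 * p - 1| = 2 * p - 1 := abs_of_pos hcase
    have hpbig : (1 + η₀) / 2 < p := by rw [habs'] at hpη; linarith
    obtain ⟨k0, k1, k2⟩ := key η₀ F₀ a p hη0 hη1 hF0 hF1 ha1 ha2 hpbig hp1 Dq hD
    have hsF : F₀ * s = F₀ := by rw [hs1, mul_one]
    rw [hsF]
    have habs : |a - F₀| = F₀ - a := by rw [abs_of_nonpos (by linarith)]; ring
    rw [habs]
    have hpos : (0:ℝ) ≤ 1 / (2 * (Real.exp (-F₀) + Real.exp F₀ + 2)) := by positivity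
    have hterm := mul_nonneg hpos (sq_nonneg (a - F₀))
    exact ⟨mul_nonneg (by linarith) k0, by linarith, k1, by linarith [k2]⟩
  · have hne : 2 * p - 1 ≠ 0 := abs_pos.mp (lt_trans hη0 hpη)
    have hneg : 2 * p - 1 < 0 := lt_of_le_of_ne (not_lt.mp hcase) hne
    have hs1 : s = -1 := by rw [hs, if_neg hcase]
    have habs' : |2 * p - 1| = 1 - 2 * p := by rw [abs_of_neg hneg]; ring
    have hpbig : (1 + η₀) / 2 < 1 - p := by rw [habs'] at hpη; linarith
    obtain ⟨k0, k1, k2⟩ := key η₀ F₀ (-a) (1 - p) hη0 hη1 hF0 hF1 (by linarith) (by linarith)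
      hpbig (by linarith) Dq hD
    simp only [neg_neg] at k1 k2
    have hsF : F₀ * s = -F₀ := by rw [hs1]; ring
    rw [hsF]
    simp only [neg_neg]
    have habs : |a - -F₀| = F₀ - -a := by rw [abs_of_nonneg (by linarith)]; ring
    rw [habs]
    have hsq : (a - -F₀) ^ 2 = (-a - F₀) ^ 2 := by ring
    rw [hsq]
    have hpos : (0:ℝ) ≤ 1 / (2 * (Real.exp (-F₀) + Real.exp F₀ + 2)) := by positivity
    have hterm := mul_nonneg hpos (sq_nonneg (-a - F₀))
    exact ⟨mul_nonneg (by linarith) k0, by linarith, by linarith [k1], by linarith [k2]⟩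


end

end DNNLogistic
end
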